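/- arXiv:2604.08733 — 3 statements merged into one kernel-verified Lean document; each statement's English description precedes it below -/
import Mathlib

section
/- (Proposition 2.1, monotonicity inequality) For every p > 1 there exists a constant C̃_p > 0 such that for all η, η' ∈ ℝ^N with |η| + |η'| > 0 one has (a_p(η) − a_p(η')) · (η − η') ≥ C̃_p (|η| + |η'|)^{p−2} |η − η'|². -/
set_option maxHeartbeats 1000000

open scoped RealInnerProductSpace Classical

/-- The anisotropic vector field `a_p(η) = H(η)^(p-1) ∇H(η)` (and `a_p 0 = 0`). -/
noncomputable def aVec {N : ℕ} (H : EuclideanSpace ℝ (Fin N) → ℝ) (p : ℝ) :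
    EuclideanSpace ℝ (Fin N) → EuclideanSpace ℝ (Fin N) :=
  fun η => if η = 0 then 0 else (H η) ^ (p - 1) • gradient H η

open Real Set Filter

namespace S5

variable {N : ℕ}

local notation "E" => EuclideanSpace ℝ (Fin N)

lemma grad_inner (H : E → ℝ) (x y : E) : ⟪gradient H x, y⟫ = fderiv ℝ H x y :=
  InnerProductSpace.toDual_symm_apply

lemma mem_c' (x : E) (hx : x ≠ 0) : {(0:E)}ᶜ ∈ nhds x :=
  (isOpen_compl_singleton).mem_nhds (by simpa using hx)

lemma hfd' {H : E → ℝ} (hHC2 : ContDiffOn ℝ 2 H {(0 : E)}ᶜ) (x : E) (hx : x ≠ 0) :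
    HasFDerivAt H (fderiv ℝ H x) x :=
  ((hHC2.differentiableOn two_ne_zero).differentiableAt (mem_c' x hx)).hasFDerivAt

lemma hd1' {H : E → ℝ} (hHC2 : ContDiffOn ℝ 2 H {(0 : E)}ᶜ) :
    ContDiffOn ℝ 1 (fderiv ℝ H) {(0:E)}ᶜ := by
  have h2 : ContDiffOn ℝ (1+1) H {(0:E)}ᶜ := by norm_num at hHC2 ⊢; exact hHC2
  exact ((contDiffOn_succ_iff_fderiv_of_isOpen isOpen_compl_singleton).mp h2).2.2

lemma hfd2' {H : E → ℝ} (hHC2 : ContDiffOn ℝ 2 H {(0 : E)}ᶜ) (x : E) (hx : x ≠ 0) :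
    HasFDerivAt (fderiv ℝ H) (fderiv ℝ (fderiv ℝ H) x) x :=
  (((hd1' hHC2).differentiableOn one_ne_zero).differentiableAt (mem_c' x hx)).hasFDerivAt

lemma contD2 {H : E → ℝ} (hHC2 : ContDiffOn ℝ 2 H {(0 : E)}ᶜ) :
    ContinuousOn (fderiv ℝ (fderiv ℝ H)) {(0:E)}ᶜ :=
  (hd1' hHC2).continuousOn_fderiv_of_isOpen isOpen_compl_singleton le_rfl

-- homogeneity of the fderiv
lemma fderiv_homog {H : E → ℝ} (hHC2 : ContDiffOn ℝ 2 H {(0 : E)}ᶜ)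
    (hH0 : H 0 = 0)
    (hHhom : ∀ ξ : E, ξ ≠ 0 → ∀ t : ℝ, 0 < t → H (t • ξ) = t * H ξ)
    (x : E) (hx : x ≠ 0) (t : ℝ) (ht : 0 < t) :
    fderiv ℝ H (t • x) = fderiv ℝ H x := by
  have Hg : ∀ y : E, H (t • y) = t * H y := by
    intro y
    by_cases hy : y = 0
    · simp [hy, hH0]
    · exact hHhom y hy t ht
  have hsm : HasFDerivAt (fun y : E => t • y) (t • ContinuousLinearMap.id ℝ E) x :=
    (t • ContinuousLinearMap.id ℝ E).hasFDerivAt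
  have htx : (t • x) ≠ 0 := smul_ne_zero (ne_of_gt ht) hx
  have A : HasFDerivAt (fun y : E => H (t • y))
      ((fderiv ℝ H (t • x)).comp (t • ContinuousLinearMap.id ℝ E)) x :=
    (hfd' hHC2 (t • x) htx).comp x hsm
  have B : HasFDerivAt (fun y : E => t * H y) (t • fderiv ℝ H x) x :=
    (hfd' hHC2 x hx).const_mul t
  have A' : HasFDerivAt (fun y : E => t * H y)
      ((fderiv ℝ H (t • x)).comp (t • ContinuousLinearMap.id ℝ E)) x := by
    have : (fun y : E => H (t • y)) = fun y : E => t * H y := funext Hg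
    rwa [this] at A
  have heq := A'.unique B
  ext ζ
  have := congrArg (fun (L : E →L[ℝ] ℝ) => L ζ) heq
  simp only [ContinuousLinearMap.comp_apply, ContinuousLinearMap.smul_apply,
    ContinuousLinearMap.id_apply, map_smul] at this
  simp only [smul_eq_mul] at this
  exact mul_left_cancel₀ (ne_of_gt ht) this

-- Euler's identity
lemma euler {H : E → ℝ} (hHC2 : ContDiffOn ℝ 2 H {(0 : E)}ᶜ)
    (hHhom : ∀ ξ : E, ξ ≠ 0 → ∀ t : ℝ, 0 < t → H (t • ξ) = t * H ξ)
    (x : E) (hx : x ≠ 0) : fderiv ℝ H x x = H x := by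
  have hc : HasDerivAt (fun s : ℝ => s • x) x 1 := by
    simpa using (hasDerivAt_id (1:ℝ)).smul_const x
  have A : HasDerivAt (fun s : ℝ => H (s • x)) (fderiv ℝ H x x) 1 := by
    have h1 : HasFDerivAt H (fderiv ℝ H x) ((1:ℝ) • x) := by
      rw [one_smul]; exact hfd' hHC2 x hx
    exact h1.comp_hasDerivAt (x := (1:ℝ)) hc
  have heq : (fun s : ℝ => s * H x) =ᶠ[nhds (1:ℝ)] fun s : ℝ => H (s • x) := by
    have : Ioi (0:ℝ) ∈ nhds (1:ℝ) := isOpen_Ioi.mem_nhds (by norm_num)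
    filter_upwards [this] with s hs
    rw [hHhom x hx s hs]
  have A' : HasDerivAt (fun s : ℝ => s * H x) (fderiv ℝ H x x) 1 :=
    A.congr_of_eventuallyEq heq
  have B : HasDerivAt (fun s : ℝ => s * H x) (H x) 1 := by
    simpa using (hasDerivAt_id (1:ℝ)).mul_const (H x)
  exact A'.unique B


lemma D2_homog {H : E → ℝ} (hHC2 : ContDiffOn ℝ 2 H {(0 : E)}ᶜ)
    (hH0 : H 0 = 0)
    (hHhom : ∀ ξ : E, ξ ≠ 0 → ∀ t : ℝ, 0 < t → H (t • ξ) = t * H ξ)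
    (x : E) (hx : x ≠ 0) (t : ℝ) (ht : 0 < t) (ζ w : E) :
    fderiv ℝ (fderiv ℝ H) (t • x) ζ w = t⁻¹ * fderiv ℝ (fderiv ℝ H) x ζ w := by
  have htx : (t • x) ≠ 0 := smul_ne_zero (ne_of_gt ht) hx
  have hsm : HasFDerivAt (fun y : E => t • y) (t • ContinuousLinearMap.id ℝ E) x :=
    (t • ContinuousLinearMap.id ℝ E).hasFDerivAt
  have A : HasFDerivAt (fun y : E => fderiv ℝ H (t • y))
      ((fderiv ℝ (fderiv ℝ H) (t • x)).comp (t • ContinuousLinearMap.id ℝ E)) x :=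
    (hfd2' hHC2 (t • x) htx).comp x hsm
  have A' : HasFDerivAt (fderiv ℝ H)
      ((fderiv ℝ (fderiv ℝ H) (t • x)).comp (t • ContinuousLinearMap.id ℝ E)) x := by
    apply A.congr_of_eventuallyEq
    filter_upwards [mem_c' x hx] with y hy
    exact (fderiv_homog hHC2 hH0 hHhom y (by simpa using hy) t ht).symm
  have heq := A'.unique (hfd2' hHC2 x hx)
  have h3 := congrArg (fun (L : E →L[ℝ] E →L[ℝ] ℝ) => L ζ w) heq
  simp only [ContinuousLinearMap.comp_apply, ContinuousLinearMap.smul_apply,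
    ContinuousLinearMap.id_apply, map_smul, smul_eq_mul] at h3
  field_simp
  linarith [h3]



lemma D2_self {H : E → ℝ} (hHC2 : ContDiffOn ℝ 2 H {(0 : E)}ᶜ)
    (hH0 : H 0 = 0)
    (hHhom : ∀ ξ : E, ξ ≠ 0 → ∀ t : ℝ, 0 < t → H (t • ξ) = t * H ξ)
    (x : E) (hx : x ≠ 0) (w : E) :
    fderiv ℝ (fderiv ℝ H) x x w = 0 := by
  have hc : HasDerivAt (fun s : ℝ => s • x) x 1 := by
    simpa using (hasDerivAt_id (1:ℝ)).smul_const x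
  have h1 : HasFDerivAt (fderiv ℝ H) (fderiv ℝ (fderiv ℝ H) x) ((1:ℝ) • x) := by
    rw [one_smul]; exact hfd2' hHC2 x hx
  have A : HasDerivAt (fun s : ℝ => fderiv ℝ H (s • x)) (fderiv ℝ (fderiv ℝ H) x x) 1 := by
    exact h1.comp_hasDerivAt (x := (1:ℝ)) hc
  have A2 : HasDerivAt (fun _ : ℝ => fderiv ℝ H x) (fderiv ℝ (fderiv ℝ H) x x) 1 := by
    apply A.congr_of_eventuallyEq
    have hIoi : Ioi (0:ℝ) ∈ nhds (1:ℝ) := isOpen_Ioi.mem_nhds (by norm_num)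
    filter_upwards [hIoi] with s hs
    exact (fderiv_homog hHC2 hH0 hHhom x hx s hs).symm
  have B : HasDerivAt (fun _ : ℝ => fderiv ℝ H x) (0 : EuclideanSpace ℝ (Fin N) →L[ℝ] ℝ) 1 :=
    hasDerivAt_const _ _
  have h0 := A2.unique B
  rw [h0]; rfl

lemma D2_symm {H : E → ℝ} (hHC2 : ContDiffOn ℝ 2 H {(0 : E)}ᶜ)
    (x : E) (hx : x ≠ 0) (u w : E) :
    fderiv ℝ (fderiv ℝ H) x u w = fderiv ℝ (fderiv ℝ H) x w u := by
  apply second_derivative_symmetric_of_eventually (f := H) (f' := fderiv ℝ H) (x := x)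
  · filter_upwards [mem_c' x hx] with y hy
    exact hfd' hHC2 y (by simpa using hy)
  · exact hfd2' hHC2 x hx

lemma rpow_anti {a b c : ℝ} (ha : 0 < a) (hab : a ≤ b) (hc : c ≤ 0) : b ^ c ≤ a ^ c := by
  have hb : 0 < b := lt_of_lt_of_le ha hab
  rw [← neg_neg c, Real.rpow_neg ha.le, Real.rpow_neg hb.le]
  exact inv_anti₀ (Real.rpow_pos_of_pos ha _) (Real.rpow_le_rpow ha.le hab (by linarith))

lemma sphere_ne (hN : 2 ≤ N) : ∃ u : E, ‖u‖ = 1 := by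
  refine ⟨EuclideanSpace.single ⟨0, by omega⟩ (1:ℝ), ?_⟩
  rw [EuclideanSpace.norm_single]; norm_num

lemma bounds {H : E → ℝ} (hHC2 : ContDiffOn ℝ 2 H {(0 : E)}ᶜ)
    (hHpos : ∀ ξ : E, ξ ≠ 0 → 0 < H ξ)
    (hHhom : ∀ ξ : E, ξ ≠ 0 → ∀ t : ℝ, 0 < t → H (t • ξ) = t * H ξ)
    (hN : 2 ≤ N) :
    ∃ m M : ℝ, 0 < m ∧ 0 < M ∧ ∀ x : E, x ≠ 0 → m * ‖x‖ ≤ H x ∧ H x ≤ M * ‖x‖ := by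
  obtain ⟨u₀, hu₀⟩ := sphere_ne (N := N) hN
  have hSsub : Metric.sphere (0:E) 1 ⊆ {(0:E)}ᶜ := by
    intro y hy
    simp only [mem_compl_iff, mem_singleton_iff]
    intro h
    rw [mem_sphere_zero_iff_norm] at hy
    rw [h] at hy; simp at hy
  have hcont : ContinuousOn H (Metric.sphere (0:E) 1) := hHC2.continuousOn.mono hSsub
  have hne : (Metric.sphere (0:E) 1).Nonempty := ⟨u₀, by rwa [mem_sphere_zero_iff_norm]⟩
  obtain ⟨z, hzS, hz⟩ := (isCompact_sphere (0:E) 1).exists_isMinOn hne hcont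
  obtain ⟨Z, hZS, hZ⟩ := (isCompact_sphere (0:E) 1).exists_isMaxOn hne hcont
  have hz0 : z ≠ 0 := fun h => by simpa [h] using hSsub hzS
  have hZ0 : Z ≠ 0 := fun h => by simpa [h] using hSsub hZS
  refine ⟨H z, H Z, hHpos z hz0, hHpos Z hZ0, fun x hx => ?_⟩
  have hxn : 0 < ‖x‖ := norm_pos_iff.mpr hx
  set u : E := ‖x‖⁻¹ • x with hu
  have hun : ‖u‖ = 1 := by
    rw [hu, norm_smul, norm_inv, norm_norm, inv_mul_cancel₀ (ne_of_gt hxn)]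
  have huS : u ∈ Metric.sphere (0:E) 1 := by rwa [mem_sphere_zero_iff_norm]
  have hu0 : u ≠ 0 := fun h => by rw [h] at hun; simp at hun
  have hxu : x = ‖x‖ • u := by rw [hu, smul_inv_smul₀ (ne_of_gt hxn)]
  have hHx : H x = ‖x‖ * H u := by conv_lhs => rw [hxu]; rw [hHhom u hu0 _ hxn]
  constructor
  · rw [hHx, mul_comm (H z) ‖x‖]
    exact mul_le_mul_of_nonneg_left (hz huS) hxn.le
  · rw [hHx, mul_comm (H Z) ‖x‖]
    exact mul_le_mul_of_nonneg_left (hZ huS) hxn.le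


lemma grad_bound {H : E → ℝ} (hHC2 : ContDiffOn ℝ 2 H {(0 : E)}ᶜ)
    (hH0 : H 0 = 0)
    (hHhom : ∀ ξ : E, ξ ≠ 0 → ∀ t : ℝ, 0 < t → H (t • ξ) = t * H ξ)
    (hN : 2 ≤ N) :
    ∃ K : ℝ, 0 < K ∧ ∀ x : E, x ≠ 0 → ‖fderiv ℝ H x‖ ≤ K := by
  obtain ⟨u₀, hu₀⟩ := sphere_ne (N := N) hN
  have hSsub : Metric.sphere (0:E) 1 ⊆ {(0:E)}ᶜ := by
    intro y hy
    simp only [mem_compl_iff, mem_singleton_iff]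
    intro h
    rw [mem_sphere_zero_iff_norm] at hy
    rw [h] at hy; simp at hy
  have hcont : ContinuousOn (fun y : E => ‖fderiv ℝ H y‖) (Metric.sphere (0:E) 1) :=
    ((hd1' hHC2).continuousOn.mono hSsub).norm
  have hne : (Metric.sphere (0:E) 1).Nonempty := ⟨u₀, by rwa [mem_sphere_zero_iff_norm]⟩
  obtain ⟨Z, hZS, hZ⟩ := (isCompact_sphere (0:E) 1).exists_isMaxOn hne hcont
  refine ⟨‖fderiv ℝ H Z‖ + 1, by positivity, fun x hx => ?_⟩
  have hxn : 0 < ‖x‖ := norm_pos_iff.mpr hx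
  set u : E := ‖x‖⁻¹ • x with hu
  have hun : ‖u‖ = 1 := by
    rw [hu, norm_smul, norm_inv, norm_norm, inv_mul_cancel₀ (ne_of_gt hxn)]
  have huS : u ∈ Metric.sphere (0:E) 1 := by rwa [mem_sphere_zero_iff_norm]
  have hu0 : u ≠ 0 := fun h => by rw [h] at hun; simp at hun
  have hfe : fderiv ℝ H x = fderiv ℝ H u := by
    conv_lhs => rw [show x = ‖x‖ • u by rw [hu, smul_inv_smul₀ (ne_of_gt hxn)]]
    exact fderiv_homog hHC2 hH0 hHhom u hu0 _ hxn
  rw [hfe]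
  have h2 : ‖fderiv ℝ H u‖ ≤ ‖fderiv ℝ H Z‖ := hZ huS
  linarith

lemma ell' {H : E → ℝ} {lam : ℝ}
    (hHell : ∀ ξ : E, H ξ = 1 → ∀ ζ : E, ⟪gradient H ξ, ζ⟫ = 0 →
      lam * ‖ζ‖ ^ 2 ≤ iteratedFDeriv ℝ 2 H ξ ![ζ, ζ])
    (x : E) (hx1 : H x = 1) (ζ : E) (hζ : fderiv ℝ H x ζ = 0) :
    lam * ‖ζ‖ ^ 2 ≤ fderiv ℝ (fderiv ℝ H) x ζ ζ := by
  have h := hHell x hx1 ζ (by rw [grad_inner]; exact hζ)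
  rwa [iteratedFDeriv_two_apply] at h

lemma form_bound {H : E → ℝ} (hHC2 : ContDiffOn ℝ 2 H {(0 : E)}ᶜ)
    (hH0 : H 0 = 0)
    (hHpos : ∀ ξ : E, ξ ≠ 0 → 0 < H ξ)
    (hHhom : ∀ ξ : E, ξ ≠ 0 → ∀ t : ℝ, 0 < t → H (t • ξ) = t * H ξ)
    {lam : ℝ} (hlam : 0 < lam)
    (hHell : ∀ ξ : E, H ξ = 1 → ∀ ζ : E, ⟪gradient H ξ, ζ⟫ = 0 →
      lam * ‖ζ‖ ^ 2 ≤ iteratedFDeriv ℝ 2 H ξ ![ζ, ζ])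
    (hN : 2 ≤ N) {p : ℝ} (hp : 1 < p) :
    ∃ c₀ : ℝ, 0 < c₀ ∧ ∀ x : E, x ≠ 0 → ∀ ζ : E,
      c₀ * ‖x‖ ^ (p-2) * ‖ζ‖^2 ≤
        (p-1) * H x ^ (p-2) * (fderiv ℝ H x ζ)^2
          + H x ^ (p-1) * fderiv ℝ (fderiv ℝ H) x ζ ζ := by
  obtain ⟨m, M, hm, hM, hmM⟩ := bounds hHC2 hHpos hHhom hN
  set c₂ : ℝ := min lam ((p-1) * m^2) / 2 with hc₂
  have hc₂pos : 0 < c₂ := by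
    have : 0 < (p-1) * m^2 := mul_pos (by linarith) (by positivity)
    rw [hc₂]; positivity
  -- unit-level bound
  have unit : ∀ x : E, x ≠ 0 → H x = 1 → ∀ ζ : E,
      c₂ * ‖ζ‖^2 ≤ (p-1) * (fderiv ℝ H x ζ)^2 + fderiv ℝ (fderiv ℝ H) x ζ ζ := by
    intro x hx hx1 ζ
    set α : ℝ := fderiv ℝ H x ζ with hα
    set w : E := ζ - α • x with hwdef
    have hw : fderiv ℝ H x w = 0 := by
      rw [hwdef, map_sub, map_smul]
      rw [euler hHC2 hHhom x hx, hx1]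
      simp [hα]
    have hellw : lam * ‖w‖^2 ≤ fderiv ℝ (fderiv ℝ H) x w w := ell' hHell x hx1 w hw
    have hD2eq : fderiv ℝ (fderiv ℝ H) x ζ ζ = fderiv ℝ (fderiv ℝ H) x w w := by
      have hζw : ζ = w + α • x := by rw [hwdef]; abel
      conv_lhs => rw [hζw]
      rw [map_add, map_smul]
      simp only [ContinuousLinearMap.add_apply, ContinuousLinearMap.smul_apply, map_add, map_smul,
        smul_eq_mul]
      have h1 : fderiv ℝ (fderiv ℝ H) x x w = 0 := D2_self hHC2 hH0 hHhom x hx w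
      have h2 : fderiv ℝ (fderiv ℝ H) x w x = 0 := by
        rw [D2_symm hHC2 x hx]; exact h1
      have h3 : fderiv ℝ (fderiv ℝ H) x x x = 0 := D2_self hHC2 hH0 hHhom x hx x
      rw [h1, h2, h3]; ring
    rw [hD2eq]
    have hxm : m * ‖x‖ ≤ 1 := by
      have := (hmM x hx).1; rw [hx1] at this; linarith
    have htri : ‖ζ‖ ≤ ‖w‖ + |α| * ‖x‖ := by
      have hζw : ζ = w + α • x := by rw [hwdef]; abel
      calc ‖ζ‖ = ‖w + α • x‖ := by rw [← hζw]
        _ ≤ ‖w‖ + ‖α • x‖ := norm_add_le _ _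
        _ = ‖w‖ + |α| * ‖x‖ := by rw [norm_smul, Real.norm_eq_abs]
    have h1 : m * ‖ζ‖ ≤ m * ‖w‖ + |α| := by
      have : m * ‖ζ‖ ≤ m * (‖w‖ + |α| * ‖x‖) := mul_le_mul_of_nonneg_left htri hm.le
      have h2 : |α| * (m * ‖x‖) ≤ |α| * 1 := mul_le_mul_of_nonneg_left hxm (abs_nonneg _)
      nlinarith
    have h1sq : (m * ‖ζ‖)^2 ≤ (m * ‖w‖ + |α|)^2 := by
      have hl : 0 ≤ m * ‖ζ‖ := by positivity
      nlinarith
    have hmin1 : c₂ * 2 ≤ lam := by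
      rw [hc₂]; have := min_le_left lam ((p-1)*m^2); linarith
    have hmin2 : c₂ * 2 ≤ (p-1) * m^2 := by
      rw [hc₂]; have := min_le_right lam ((p-1)*m^2); linarith
    have key : m^2 * (c₂ * ‖ζ‖^2) ≤ m^2 * ((p-1) * α^2 + lam * ‖w‖^2) := by
      nlinarith [sq_nonneg (m * ‖w‖ - |α|), sq_abs α, sq_nonneg ‖w‖, sq_nonneg α,
        mul_le_mul_of_nonneg_right hmin1 (sq_nonneg ‖w‖),
        mul_le_mul_of_nonneg_right hmin2 (sq_nonneg α), hc₂pos.le, sq_nonneg (m*‖ζ‖)]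
    have hm2 : 0 < m^2 := by positivity
    have := (mul_le_mul_iff_right₀ hm2).mp key
    nlinarith [hellw]
  -- scaling
  set cm : ℝ := min (m ^ (p-2)) (M ^ (p-2)) with hcm
  have hcmpos : 0 < cm := by
    rw [hcm]
    exact lt_min (Real.rpow_pos_of_pos hm _) (Real.rpow_pos_of_pos hM _)
  refine ⟨c₂ * cm, by positivity, fun x hx ζ => ?_⟩
  have hs : 0 < H x := hHpos x hx
  set s : ℝ := H x with hsdef
  have hxn : 0 < ‖x‖ := norm_pos_iff.mpr hx
  set y : E := s⁻¹ • x with hy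
  have hy0 : y ≠ 0 := smul_ne_zero (by positivity) hx
  have hy1 : H y = 1 := by
    rw [hy, hHhom x hx s⁻¹ (by positivity)]
    field_simp
    exact hsdef.symm
  have hdf : fderiv ℝ H y = fderiv ℝ H x := fderiv_homog hHC2 hH0 hHhom x hx s⁻¹ (by positivity)
  have hD2 : fderiv ℝ (fderiv ℝ H) y ζ ζ = s * fderiv ℝ (fderiv ℝ H) x ζ ζ := by
    have hxy : x = s • y := by rw [hy, smul_inv_smul₀ (ne_of_gt hs)]
    have := D2_homog hHC2 hH0 hHhom y hy0 s hs ζ ζ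
    rw [← hxy] at this
    rw [this]
    field_simp
  have hu := unit y hy0 hy1 ζ
  rw [hdf, hD2] at hu
  -- multiply by s^(p-2)
  have hsp : 0 < s ^ (p-2) := Real.rpow_pos_of_pos hs _
  have hmain : s ^ (p-2) * (c₂ * ‖ζ‖^2) ≤
      (p-1) * s ^ (p-2) * (fderiv ℝ H x ζ)^2 + s ^ (p-1) * fderiv ℝ (fderiv ℝ H) x ζ ζ := by
    have h2 := mul_le_mul_of_nonneg_left hu hsp.le
    have hss : s ^ (p-2) * s = s ^ (p-1) := by
      nth_rewrite 2 [← Real.rpow_one s]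
      rw [← Real.rpow_add hs]
      norm_num
      ring_nf
    calc s ^ (p-2) * (c₂ * ‖ζ‖^2)
        ≤ s ^ (p-2) * ((p-1) * (fderiv ℝ H x ζ)^2 + s * fderiv ℝ (fderiv ℝ H) x ζ ζ) := h2
      _ = (p-1) * s ^ (p-2) * (fderiv ℝ H x ζ)^2
          + (s ^ (p-2) * s) * fderiv ℝ (fderiv ℝ H) x ζ ζ := by ring
      _ = _ := by rw [hss]
  -- compare s^(p-2) with ‖x‖^(p-2)
  have hcmp : cm * ‖x‖ ^ (p-2) ≤ s ^ (p-2) := by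
    rcases le_or_gt 2 p with h2p | h2p
    · have h1 : m * ‖x‖ ≤ s := (hmM x hx).1
      have h3 : (m * ‖x‖) ^ (p-2) ≤ s ^ (p-2) :=
        Real.rpow_le_rpow (by positivity) h1 (by linarith)
      rw [Real.mul_rpow hm.le hxn.le] at h3
      calc cm * ‖x‖ ^ (p-2) ≤ m ^ (p-2) * ‖x‖ ^ (p-2) := by
            apply mul_le_mul_of_nonneg_right _ (Real.rpow_pos_of_pos hxn _).le
            rw [hcm]; exact min_le_left _ _
        _ ≤ s ^ (p-2) := h3
    · have h1 : s ≤ M * ‖x‖ := (hmM x hx).2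
      have h3 : (M * ‖x‖) ^ (p-2) ≤ s ^ (p-2) := rpow_anti hs h1 (by linarith)
      rw [Real.mul_rpow hM.le hxn.le] at h3
      calc cm * ‖x‖ ^ (p-2) ≤ M ^ (p-2) * ‖x‖ ^ (p-2) := by
            apply mul_le_mul_of_nonneg_right _ (Real.rpow_pos_of_pos hxn _).le
            rw [hcm]; exact min_le_right _ _
        _ ≤ s ^ (p-2) := h3
  calc c₂ * cm * ‖x‖ ^ (p-2) * ‖ζ‖^2 = (cm * ‖x‖ ^ (p-2)) * (c₂ * ‖ζ‖^2) := by ring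
    _ ≤ s ^ (p-2) * (c₂ * ‖ζ‖^2) := by
        apply mul_le_mul_of_nonneg_right hcmp (by positivity)
    _ ≤ _ := hmain

lemma aVec_inner {H : E → ℝ} {p : ℝ} (x δ : E) (hx : x ≠ 0) :
    ⟪aVec H p x, δ⟫ = H x ^ (p-1) * fderiv ℝ H x δ := by
  rw [aVec, if_neg hx, real_inner_smul_left, grad_inner]

lemma segment_ineq {H : E → ℝ} (hHC2 : ContDiffOn ℝ 2 H {(0 : E)}ᶜ)
    (hHpos : ∀ ξ : E, ξ ≠ 0 → 0 < H ξ)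
    {p : ℝ} (hp : 1 < p) {c₀ : ℝ}
    (hc₀ : ∀ x : E, x ≠ 0 → ∀ ζ : E,
      c₀ * ‖x‖ ^ (p-2) * ‖ζ‖^2 ≤
        (p-1) * H x ^ (p-2) * (fderiv ℝ H x ζ)^2
          + H x ^ (p-1) * fderiv ℝ (fderiv ℝ H) x ζ ζ)
    (η η' : E) (hgood : ∀ t ∈ Icc (0:ℝ) 1, η' + t • (η - η') ≠ 0) :
    c₀ * ‖η - η'‖^2 * (∫ t in (0:ℝ)..1, ‖η' + t • (η - η')‖ ^ (p-2)) ≤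
      ⟪aVec H p η - aVec H p η', η - η'⟫ := by
  set δ : E := η - η' with hδ
  set γ : ℝ → E := fun t => η' + t • δ with hγ
  have hγc : Continuous γ := by
    apply continuous_const.add
    exact continuous_id.smul continuous_const
  have hγ0 : γ 0 = η' := by simp [hγ]
  have hγ1 : γ 1 = η := by simp [hγ, hδ]
  have huIcc : uIcc (0:ℝ) 1 = Icc (0:ℝ) 1 := uIcc_of_le zero_le_one
  have hmaps : ∀ t ∈ Icc (0:ℝ) 1, γ t ∈ ({(0:E)}ᶜ : Set _) := by
    intro t ht
    simpa using hgood t ht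
  set d : ℝ → ℝ := fun t => fderiv ℝ H (γ t) δ with hd
  set h : ℝ → ℝ := fun t => H (γ t) with hh
  set g : ℝ → ℝ := fun t => h t ^ (p-1) * d t with hg
  set g' : ℝ → ℝ := fun t =>
    (p-1) * h t ^ (p-2) * (d t)^2 + h t ^ (p-1) * fderiv ℝ (fderiv ℝ H) (γ t) δ δ with hg'
  have hγd : ∀ t : ℝ, HasDerivAt γ δ t := by
    intro t
    have : HasDerivAt (fun u : ℝ => u • δ) ((1:ℝ) • δ) t := (hasDerivAt_id t).smul_const δ
    have h2 := this.const_add η'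
    rw [one_smul] at h2
    exact h2
  have hgd : ∀ t ∈ Icc (0:ℝ) 1, HasDerivAt g (g' t) t := by
    intro t ht
    have hne : γ t ≠ 0 := hgood t ht
    have hhd : HasDerivAt h (d t) t := (hfd' hHC2 (γ t) hne).comp_hasDerivAt t (hγd t)
    have hHpos' : h t ≠ 0 := ne_of_gt (hHpos _ hne)
    have hps : HasDerivAt (fun u => h u ^ (p-1)) (d t * (p-1) * h t ^ (p-1-1)) t :=
      hhd.rpow_const (Or.inl hHpos')
    have hcd : HasDerivAt (fun u => fderiv ℝ H (γ u)) (fderiv ℝ (fderiv ℝ H) (γ t) δ) t :=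
      (hfd2' hHC2 (γ t) hne).comp_hasDerivAt t (hγd t)
    have hdd : HasDerivAt d (fderiv ℝ (fderiv ℝ H) (γ t) δ δ) t := by
      simpa using hcd.clm_apply (hasDerivAt_const t δ)
    have := hps.mul hdd
    refine this.congr_deriv ?_
    have hexp : p - 1 - 1 = p - 2 := by ring
    rw [hexp, hg']
    ring
  have hcontH : ContinuousOn h (Icc (0:ℝ) 1) :=
    hHC2.continuousOn.comp hγc.continuousOn hmaps
  have hcontd : ContinuousOn d (Icc (0:ℝ) 1) :=
    ((hd1' hHC2).continuousOn.comp hγc.continuousOn hmaps).clm_apply continuousOn_const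
  have hcontD2 : ContinuousOn (fun t => fderiv ℝ (fderiv ℝ H) (γ t) δ δ) (Icc (0:ℝ) 1) :=
    (((contD2 hHC2).comp hγc.continuousOn hmaps).clm_apply continuousOn_const).clm_apply
      continuousOn_const
  have hcontg' : ContinuousOn g' (Icc (0:ℝ) 1) := by
    apply ContinuousOn.add
    · apply ContinuousOn.mul
      · apply ContinuousOn.mul continuousOn_const
        exact hcontH.rpow_const fun t ht => Or.inl (ne_of_gt (hHpos _ (hgood t ht)))
      · exact hcontd.pow 2
    · exact (hcontH.rpow_const fun t ht => Or.inl (ne_of_gt (hHpos _ (hgood t ht)))).mul hcontD2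
  have hint : IntervalIntegrable g' MeasureTheory.volume 0 1 := by
    apply ContinuousOn.intervalIntegrable
    rwa [huIcc]
  have hFTC : ∫ t in (0:ℝ)..1, g' t = g 1 - g 0 := by
    apply intervalIntegral.integral_eq_sub_of_hasDerivAt
    · intro t ht
      rw [huIcc] at ht
      exact hgd t ht
    · exact hint
  have hlow : ContinuousOn (fun t => c₀ * ‖γ t‖ ^ (p-2) * ‖δ‖^2) (Icc (0:ℝ) 1) := by
    apply ContinuousOn.mul _ continuousOn_const
    apply ContinuousOn.mul continuousOn_const
    exact (hγc.continuousOn.norm).rpow_const fun t ht =>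
      Or.inl (ne_of_gt (norm_pos_iff.mpr (hgood t ht)))
  have hlowint : IntervalIntegrable (fun t => c₀ * ‖γ t‖ ^ (p-2) * ‖δ‖^2)
      MeasureTheory.volume 0 1 := by
    apply ContinuousOn.intervalIntegrable
    rwa [huIcc]
  have hmono : (∫ t in (0:ℝ)..1, c₀ * ‖γ t‖ ^ (p-2) * ‖δ‖^2) ≤ ∫ t in (0:ℝ)..1, g' t := by
    apply intervalIntegral.integral_mono_on zero_le_one hlowint hint
    intro t ht
    exact hc₀ (γ t) (hgood t ht) δ
  have hpull : (∫ t in (0:ℝ)..1, c₀ * ‖γ t‖ ^ (p-2) * ‖δ‖^2)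
      = c₀ * ‖δ‖^2 * ∫ t in (0:ℝ)..1, ‖γ t‖ ^ (p-2) := by
    have : ∀ t : ℝ, c₀ * ‖γ t‖ ^ (p-2) * ‖δ‖^2 = c₀ * ‖δ‖^2 * ‖γ t‖ ^ (p-2) := fun t => by ring
    simp_rw [this]
    rw [intervalIntegral.integral_const_mul]
  have hend : ⟪aVec H p η - aVec H p η', δ⟫ = g 1 - g 0 := by
    rw [inner_sub_left]
    rw [show aVec H p η = aVec H p (γ 1) by rw [hγ1], show aVec H p η' = aVec H p (γ 0) by rw [hγ0]]
    rw [aVec_inner _ _ (hgood 1 (by norm_num)), aVec_inner _ _ (hgood 0 (by norm_num))]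
  rw [← hδ] at *
  rw [hend, ← hFTC, ← hpull]
  exact hmono

lemma norm_gamma_le {η η' : E} (t : ℝ) (ht : t ∈ Icc (0:ℝ) 1) :
    ‖η' + t • (η - η')‖ ≤ ‖η‖ + ‖η'‖ := by
  have hid : η' + t • (η - η') = t • η + (1-t) • η' := by module
  rw [hid]
  calc ‖t • η + (1-t) • η'‖ ≤ ‖t • η‖ + ‖(1-t) • η'‖ := norm_add_le _ _
    _ = t * ‖η‖ + (1-t) * ‖η'‖ := by
        rw [norm_smul, norm_smul, Real.norm_eq_abs, Real.norm_eq_abs,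
          abs_of_nonneg ht.1, abs_of_nonneg (by linarith [ht.2] : (0:ℝ) ≤ 1 - t)]
    _ ≤ ‖η‖ + ‖η'‖ := by
        have h1 := norm_nonneg η; have h2 := norm_nonneg η'
        nlinarith [ht.1, ht.2]

lemma norm_gamma_ge {η η' : E} (t : ℝ) (ht : t ∈ Icc (0:ℝ) 1) :
    t * ‖η‖ - (1-t) * ‖η'‖ ≤ ‖η' + t • (η - η')‖ ∧
    (1-t) * ‖η'‖ - t * ‖η‖ ≤ ‖η' + t • (η - η')‖ := by
  have hid : η' + t • (η - η') = t • η + (1-t) • η' := by module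
  have e1 : ‖t • η‖ = t * ‖η‖ := by
    rw [norm_smul, Real.norm_eq_abs, abs_of_nonneg ht.1]
  have e2 : ‖(1-t) • η'‖ = (1-t) * ‖η'‖ := by
    rw [norm_smul, Real.norm_eq_abs, abs_of_nonneg (by linarith [ht.2] : (0:ℝ) ≤ 1-t)]
  constructor
  · have h1 : ‖t • η‖ - ‖(1-t) • η'‖ ≤ ‖t • η + (1-t) • η'‖ := by
      have := norm_add_le (t • η + (1-t) • η') (-((1-t) • η'))
      simp only [add_neg_cancel_right, norm_neg] at this
      linarith
    rw [← hid] at h1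
    rw [e1, e2] at h1
    exact h1
  · have h1 : ‖(1-t) • η'‖ - ‖t • η‖ ≤ ‖t • η + (1-t) • η'‖ := by
      have h2 := norm_add_le (t • η + (1-t) • η') (-(t • η))
      have e : t • η + (1-t) • η' + -(t • η) = (1-t) • η' := by module
      rw [e, norm_neg] at h2
      linarith
    rw [← hid] at h1
    rw [e1, e2] at h1
    exact h1

lemma integral_lower {p : ℝ} (hp : 1 < p) (η η' : E)
    (hS : 0 < ‖η‖ + ‖η'‖)
    (hgood : ∀ t ∈ Icc (0:ℝ) 1, η' + t • (η - η') ≠ 0) :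
    (1/4) * min 1 ((4:ℝ) ^ (2-p)) * (‖η‖ + ‖η'‖) ^ (p-2)
      ≤ ∫ t in (0:ℝ)..1, ‖η' + t • (η - η')‖ ^ (p-2) := by
  set S : ℝ := ‖η‖ + ‖η'‖ with hSdef
  set γ : ℝ → E := fun t => η' + t • (η - η') with hγ
  have hγc : Continuous γ := by
    apply continuous_const.add
    exact continuous_id.smul continuous_const
  have huIcc : uIcc (0:ℝ) 1 = Icc (0:ℝ) 1 := uIcc_of_le zero_le_one
  have hcont : ContinuousOn (fun t => ‖γ t‖ ^ (p-2)) (Icc (0:ℝ) 1) :=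
    (hγc.continuousOn.norm).rpow_const fun t ht =>
      Or.inl (ne_of_gt (norm_pos_iff.mpr (hgood t ht)))
  have hInt : IntervalIntegrable (fun t => ‖γ t‖ ^ (p-2)) MeasureTheory.volume 0 1 := by
    apply ContinuousOn.intervalIntegrable; rwa [huIcc]
  have hSp : 0 < S ^ (p-2) := Real.rpow_pos_of_pos hS _
  rcases le_or_gt p 2 with h2p | h2p
  · -- p ≤ 2 : pointwise bound by S^(p-2)
    have hpt : ∀ t ∈ Icc (0:ℝ) 1, S ^ (p-2) ≤ ‖γ t‖ ^ (p-2) := by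
      intro t ht
      exact rpow_anti (norm_pos_iff.mpr (hgood t ht)) (norm_gamma_le t ht) (by linarith)
    have hge : S ^ (p-2) ≤ ∫ t in (0:ℝ)..1, ‖γ t‖ ^ (p-2) := by
      have := intervalIntegral.integral_mono_on zero_le_one
        (intervalIntegrable_const (c := S ^ (p-2))) hInt hpt
      simpa using this
    have hmin : min 1 ((4:ℝ) ^ (2-p)) ≤ 1 := min_le_left _ _
    have hminpos : 0 < min 1 ((4:ℝ) ^ (2-p)) :=
      lt_min one_pos (Real.rpow_pos_of_pos (by norm_num) _)
    nlinarith [hSp, hge, mul_le_mul_of_nonneg_right hmin hSp.le]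
  · -- p > 2
    have hmin : min 1 ((4:ℝ) ^ (2-p)) = (4:ℝ) ^ (2-p) := by
      apply min_eq_right
      calc (4:ℝ) ^ (2-p) ≤ (4:ℝ) ^ (0:ℝ) :=
            Real.rpow_le_rpow_of_exponent_le (by norm_num) (by linarith)
        _ = 1 := Real.rpow_zero 4
    have hS4 : (0:ℝ) < S/4 := by linarith
    have hquarter : (S/4) ^ (p-2) = (4:ℝ) ^ (2-p) * S ^ (p-2) := by
      rw [Real.div_rpow hS.le (by norm_num), show (2:ℝ)-p = -(p-2) by ring,
        Real.rpow_neg (by norm_num : (0:ℝ) ≤ 4)]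
      field_simp
    have hnn : ∀ t ∈ Ioc (0:ℝ) 1, 0 ≤ ‖γ t‖ ^ (p-2) := fun t _ => Real.rpow_nonneg (norm_nonneg _) _
    rcases le_total ‖η'‖ ‖η‖ with hcase | hcase
    · -- use [3/4, 1]
      have hpt : ∀ t ∈ Icc (3/4:ℝ) 1, (S/4) ^ (p-2) ≤ ‖γ t‖ ^ (p-2) := by
        intro t ht
        have hlb := (norm_gamma_ge (η := η) (η' := η') t ⟨by linarith [ht.1], ht.2⟩).1
        have hγge : S/4 ≤ ‖γ t‖ := by
          have h1 : t * ‖η‖ - (1-t) * ‖η'‖ ≥ S/4 := by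
            have := ht.1
            nlinarith [norm_nonneg η, norm_nonneg η']
          calc S/4 ≤ t * ‖η‖ - (1-t) * ‖η'‖ := h1
            _ ≤ ‖γ t‖ := hlb
        exact Real.rpow_le_rpow hS4.le hγge (by linarith)
      have hIntsub : IntervalIntegrable (fun t => ‖γ t‖ ^ (p-2)) MeasureTheory.volume (3/4) 1 := by
        apply ContinuousOn.intervalIntegrable
        apply hcont.mono
        rw [uIcc_of_le (by norm_num : (3/4:ℝ) ≤ 1)]
        exact Icc_subset_Icc (by norm_num) le_rfl
      have h1 : (1/4) * (S/4) ^ (p-2) ≤ ∫ t in (3/4:ℝ)..1, ‖γ t‖ ^ (p-2) := by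
        have h0 := intervalIntegral.integral_mono_on (by norm_num : (3/4:ℝ) ≤ 1)
          (intervalIntegrable_const (c := (S/4) ^ (p-2))) hIntsub hpt
        rw [intervalIntegral.integral_const, smul_eq_mul] at h0
        norm_num at h0
        linarith
      have h2 : (∫ t in (3/4:ℝ)..1, ‖γ t‖ ^ (p-2)) ≤ ∫ t in (0:ℝ)..1, ‖γ t‖ ^ (p-2) := by
        apply intervalIntegral.integral_mono_interval (by norm_num) (by norm_num) le_rfl
        · filter_upwards [MeasureTheory.ae_restrict_mem measurableSet_Ioc] with t ht
          exact hnn t ht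
        · exact hInt
      rw [hmin]
      calc (1/4) * (4:ℝ) ^ (2-p) * S ^ (p-2) = (1/4) * (S/4) ^ (p-2) := by
            rw [hquarter]; ring
        _ ≤ _ := le_trans h1 h2
    · -- use [0, 1/4]
      have hpt : ∀ t ∈ Icc (0:ℝ) (1/4), (S/4) ^ (p-2) ≤ ‖γ t‖ ^ (p-2) := by
        intro t ht
        have hlb := (norm_gamma_ge (η := η) (η' := η') t ⟨ht.1, by linarith [ht.2]⟩).2
        have hγge : S/4 ≤ ‖γ t‖ := by
          have h1 : (1-t) * ‖η'‖ - t * ‖η‖ ≥ S/4 := by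
            have := ht.2
            nlinarith [norm_nonneg η, norm_nonneg η', ht.1]
          linarith
        exact Real.rpow_le_rpow hS4.le hγge (by linarith)
      have hIntsub : IntervalIntegrable (fun t => ‖γ t‖ ^ (p-2)) MeasureTheory.volume 0 (1/4) := by
        apply ContinuousOn.intervalIntegrable
        apply hcont.mono
        rw [uIcc_of_le (by norm_num : (0:ℝ) ≤ 1/4)]
        exact Icc_subset_Icc le_rfl (by norm_num)
      have h1 : (1/4) * (S/4) ^ (p-2) ≤ ∫ t in (0:ℝ)..(1/4), ‖γ t‖ ^ (p-2) := by
        have h0 := intervalIntegral.integral_mono_on (by norm_num : (0:ℝ) ≤ 1/4)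
          (intervalIntegrable_const (c := (S/4) ^ (p-2))) hIntsub hpt
        rw [intervalIntegral.integral_const, smul_eq_mul] at h0
        norm_num at h0
        linarith
      have h2 : (∫ t in (0:ℝ)..(1/4), ‖γ t‖ ^ (p-2)) ≤ ∫ t in (0:ℝ)..1, ‖γ t‖ ^ (p-2) := by
        apply intervalIntegral.integral_mono_interval le_rfl (by norm_num) (by norm_num)
        · filter_upwards [MeasureTheory.ae_restrict_mem measurableSet_Ioc] with t ht
          exact hnn t ht
        · exact hInt
      rw [hmin]
      calc (1/4) * (4:ℝ) ^ (2-p) * S ^ (p-2) = (1/4) * (S/4) ^ (p-2) := by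
            rw [hquarter]; ring
        _ ≤ _ := le_trans h1 h2

lemma grad_norm {H : E → ℝ} (x : E) : ‖gradient H x‖ = ‖fderiv ℝ H x‖ := by
  rw [gradient]
  exact LinearIsometryEquiv.norm_map _ _

lemma aVec_contAt {H : E → ℝ} (hHC2 : ContDiffOn ℝ 2 H {(0 : E)}ᶜ)
    (hH0 : H 0 = 0)
    (hHpos : ∀ ξ : E, ξ ≠ 0 → 0 < H ξ)
    (hHhom : ∀ ξ : E, ξ ≠ 0 → ∀ t : ℝ, 0 < t → H (t • ξ) = t * H ξ)
    (hN : 2 ≤ N) {p : ℝ} (hp : 1 < p) (y : E) :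
    ContinuousAt (aVec H p) y := by
  by_cases hy : y = 0
  · subst hy
    obtain ⟨m, M, hm, hM, hmM⟩ := bounds hHC2 hHpos hHhom hN
    obtain ⟨K, hK, hKb⟩ := grad_bound hHC2 hH0 hHhom hN
    have hbound : ∀ x : E, ‖aVec H p x‖ ≤ M ^ (p-1) * K * ‖x‖ ^ (p-1) := by
      intro x
      by_cases hx : x = 0
      · subst hx
        simp [aVec, Real.zero_rpow (by linarith : p - 1 ≠ 0)]
      · rw [aVec, if_neg hx, norm_smul, Real.norm_eq_abs,
          abs_of_nonneg (Real.rpow_nonneg (hHpos x hx).le _), grad_norm]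
        have h1 : H x ^ (p-1) ≤ (M * ‖x‖) ^ (p-1) :=
          Real.rpow_le_rpow (hHpos x hx).le (hmM x hx).2 (by linarith)
        rw [Real.mul_rpow hM.le (norm_nonneg x)] at h1
        have h2 := hKb x hx
        have hge : (0:ℝ) ≤ H x ^ (p-1) := Real.rpow_nonneg (hHpos x hx).le _
        calc H x ^ (p-1) * ‖fderiv ℝ H x‖ ≤ (M ^ (p-1) * ‖x‖ ^ (p-1)) * K := by
              apply mul_le_mul h1 h2 (norm_nonneg _)
              positivity
          _ = M ^ (p-1) * K * ‖x‖ ^ (p-1) := by ring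
    have hg0 : Tendsto (fun x : E => M ^ (p-1) * K * ‖x‖ ^ (p-1)) (nhds 0) (nhds 0) := by
      have h1 : Tendsto (fun x : E => ‖x‖) (nhds 0) (nhds 0) := by
        simpa using continuous_norm.tendsto (0:E)
      have h2 : Tendsto (fun x : E => ‖x‖ ^ (p-1)) (nhds 0) (nhds ((0:ℝ) ^ (p-1))) :=
        h1.rpow_const (Or.inr (by linarith))
      rw [Real.zero_rpow (by linarith : p - 1 ≠ 0)] at h2
      have := h2.const_mul (M ^ (p-1) * K)
      simpa using this
    have htend : Tendsto (aVec H p) (nhds 0) (nhds 0) :=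
      squeeze_zero_norm hbound hg0
    have h0 : aVec H p 0 = 0 := by simp [aVec]
    rw [ContinuousAt, h0]
    exact htend
  · have hco : ContinuousAt (fun x : E => H x ^ (p-1) • gradient H x) y := by
      have hH : ContinuousAt H y := hHC2.continuousOn.continuousAt (mem_c' y hy)
      have hrp : ContinuousAt (fun x : E => H x ^ (p-1)) y :=
        hH.rpow_const (Or.inl (ne_of_gt (hHpos y hy)))
      have hgr : ContinuousAt (fun x : E => gradient H x) y := by
        have h1 : ContinuousAt (fderiv ℝ H) y :=
          (hd1' hHC2).continuousOn.continuousAt (mem_c' y hy)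
        exact ((InnerProductSpace.toDual ℝ _).symm.continuous.continuousAt).comp h1
      exact hrp.smul hgr
    apply hco.congr
    filter_upwards [mem_c' y hy] with x hx
    rw [aVec, if_neg (by simpa using hx)]

lemma exists_orth (hN : 2 ≤ N) (x : E) : ∃ v : E, ⟪x, v⟫ = 0 ∧ ‖v‖ = 1 := by
  by_cases hx : x = 0
  · obtain ⟨u, hu⟩ := sphere_ne (N := N) hN
    exact ⟨u, by simp [hx], hu⟩
  · have hKbot : ((ℝ ∙ x)ᗮ : Submodule ℝ E) ≠ ⊥ := by
      intro hbot
      have h1 : Module.finrank ℝ (ℝ ∙ x) + Module.finrank ℝ ((ℝ ∙ x)ᗮ : Submodule ℝ E) =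
          Module.finrank ℝ (EuclideanSpace ℝ (Fin N)) :=
        Submodule.finrank_add_finrank_orthogonal _
      rw [finrank_span_singleton hx, hbot] at h1
      rw [finrank_euclideanSpace_fin, finrank_bot] at h1
      omega
    obtain ⟨v₀, hv₀K, hv₀⟩ := Submodule.exists_mem_ne_zero_of_ne_bot hKbot
    have hv₀n : 0 < ‖v₀‖ := norm_pos_iff.mpr hv₀
    refine ⟨‖v₀‖⁻¹ • v₀, ?_, ?_⟩
    · rw [real_inner_smul_right]
      have : ⟪x, v₀⟫ = 0 := by
        have := hv₀K
        rw [Submodule.mem_orthogonal] at this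
        exact this x (Submodule.mem_span_singleton_self x)
      rw [this]; ring
    · rw [norm_smul, norm_inv, norm_norm, inv_mul_cancel₀ (ne_of_gt hv₀n)]

lemma main_aux {H : E → ℝ} (hHC2 : ContDiffOn ℝ 2 H {(0 : E)}ᶜ)
    (hH0 : H 0 = 0)
    (hHpos : ∀ ξ : E, ξ ≠ 0 → 0 < H ξ)
    (hHhom : ∀ ξ : E, ξ ≠ 0 → ∀ t : ℝ, 0 < t → H (t • ξ) = t * H ξ)
    (hN : 2 ≤ N) {p : ℝ} (hp : 1 < p) {c₀ : ℝ} (hc₀pos : 0 < c₀)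
    (hc₀ : ∀ x : E, x ≠ 0 → ∀ ζ : E,
      c₀ * ‖x‖ ^ (p-2) * ‖ζ‖^2 ≤
        (p-1) * H x ^ (p-2) * (fderiv ℝ H x ζ)^2
          + H x ^ (p-1) * fderiv ℝ (fderiv ℝ H) x ζ ζ)
    (η η' : E) (hS : 0 < ‖η‖ + ‖η'‖) (hη : η ≠ 0) :
    c₀ * ((1/4) * min 1 ((4:ℝ) ^ (2-p))) * (‖η‖ + ‖η'‖) ^ (p - 2) * ‖η - η'‖ ^ 2 ≤
      ⟪aVec H p η - aVec H p η', η - η'⟫ := by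
  set C : ℝ := c₀ * ((1/4) * min 1 ((4:ℝ) ^ (2-p))) with hC
  -- the "good pair" case
  have good_case : ∀ η'' : E, 0 < ‖η‖ + ‖η''‖ →
      (∀ t ∈ Icc (0:ℝ) 1, η'' + t • (η - η'') ≠ 0) →
      C * (‖η‖ + ‖η''‖) ^ (p - 2) * ‖η - η''‖ ^ 2 ≤
        ⟪aVec H p η - aVec H p η'', η - η''⟫ := by
    intro η'' hS'' hgood
    have key := segment_ineq hHC2 hHpos hp hc₀ η η'' hgood
    have intlow := integral_lower hp η η'' hS'' hgood
    have h1 : C * (‖η‖ + ‖η''‖) ^ (p - 2) * ‖η - η''‖ ^ 2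
        = (c₀ * ‖η - η''‖^2) * ((1/4) * min 1 ((4:ℝ) ^ (2-p)) * (‖η‖ + ‖η''‖) ^ (p-2)) := by
      rw [hC]; ring
    rw [h1]
    calc (c₀ * ‖η - η''‖^2) * ((1/4) * min 1 ((4:ℝ) ^ (2-p)) * (‖η‖ + ‖η''‖) ^ (p-2))
        ≤ (c₀ * ‖η - η''‖^2) * ∫ t in (0:ℝ)..1, ‖η'' + t • (η - η'')‖ ^ (p-2) := by
          apply mul_le_mul_of_nonneg_left intlow (by positivity)
      _ ≤ _ := key
  by_cases hgood : ∀ t ∈ Icc (0:ℝ) 1, η' + t • (η - η') ≠ 0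
  · exact good_case η' hS hgood
  · push_neg at hgood
    obtain ⟨t₀, ht₀, hz⟩ := hgood
    -- η' is a (nonpositive) multiple of η
    have ht₀1 : t₀ ≠ 1 := by
      intro h
      rw [h] at hz
      simp at hz
      exact hη hz
    have hη' : η' = (-t₀ / (1 - t₀)) • η := by
      have h1 : (1 - t₀) • η' + t₀ • η = 0 := by
        have : η' + t₀ • (η - η') = (1 - t₀) • η' + t₀ • η := by module
        rw [← this]; exact hz
    -- solve
      have h1t : (1 - t₀) ≠ 0 := fun h => ht₀1 (by linarith [sub_eq_zero.mp h])
      have h2 : η' = (1 - t₀)⁻¹ • (-(t₀ • η)) := by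
        have h3 : (1 - t₀) • η' = -(t₀ • η) := by
          rw [← sub_eq_zero]; rw [sub_neg_eq_add]; exact h1
        rw [← h3, inv_smul_smul₀ h1t]
      rw [h2, smul_neg, smul_smul, ← neg_smul]
      congr 1
      field_simp
    obtain ⟨v, hvo, hv1⟩ := exists_orth hN η
    have hη'v : ⟪η', v⟫ = 0 := by
      rw [hη', real_inner_smul_left, hvo, mul_zero]
    have hvv : ⟪v, v⟫ = (1:ℝ) := by
      rw [real_inner_self_eq_norm_sq, hv1]; norm_num
    have hεgood : ∀ ε : ℝ, 0 < ε → ∀ t ∈ Icc (0:ℝ) 1,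
        (η' + ε • v) + t • (η - (η' + ε • v)) ≠ 0 := by
      intro ε hε t ht heq
      have hinner := congrArg (fun z : E => ⟪z, v⟫) heq
      simp only [inner_add_left, inner_sub_left, real_inner_smul_left, inner_zero_left] at hinner
      rw [hη'v, hvo, hvv] at hinner
      have ht1 : t = 1 := by
        have : ε * (1 - t) = 0 := by linarith [hinner]
        rcases mul_eq_zero.mp this with h | h
        · exact absurd h (ne_of_gt hε)
        · linarith
      rw [ht1] at heq
      apply hη
      have : η' + ε • v + (1:ℝ) • (η - (η' + ε • v)) = η := by module
      rwa [this] at heq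
    have hSε : ∀ ε : ℝ, 0 < ‖η‖ + ‖η' + ε • v‖ := by
      intro ε
      have := norm_pos_iff.mpr hη
      have := norm_nonneg (η' + ε • v)
      linarith
    have hineq : ∀ ε : ℝ, 0 < ε →
        C * (‖η‖ + ‖η' + ε • v‖) ^ (p - 2) * ‖η - (η' + ε • v)‖ ^ 2 ≤
          ⟪aVec H p η - aVec H p (η' + ε • v), η - (η' + ε • v)⟫ := by
      intro ε hε
      exact good_case (η' + ε • v) (hSε ε) (hεgood ε hε)
    -- pass to the limit ε → 0⁺
    have htendε : Tendsto (fun ε : ℝ => η' + ε • v) (nhdsWithin 0 (Ioi 0)) (nhds η') := by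
      have hcont : Continuous (fun ε : ℝ => η' + ε • v) :=
        continuous_const.add (continuous_id.smul continuous_const)
      have := hcont.tendsto 0
      simp only [zero_smul, add_zero] at this
      exact this.mono_left nhdsWithin_le_nhds
    have hL : Tendsto (fun ε : ℝ => C * (‖η‖ + ‖η' + ε • v‖) ^ (p - 2) * ‖η - (η' + ε • v)‖ ^ 2)
        (nhdsWithin 0 (Ioi 0))
        (nhds (C * (‖η‖ + ‖η'‖) ^ (p - 2) * ‖η - η'‖ ^ 2)) := by
      apply Tendsto.mul
      apply Tendsto.mul tendsto_const_nhds
      · exact (Tendsto.add tendsto_const_nhds htendε.norm).rpow_const (Or.inl (ne_of_gt hS))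
      · exact ((tendsto_const_nhds.sub htendε).norm).pow 2
    have hR : Tendsto (fun ε : ℝ => ⟪aVec H p η - aVec H p (η' + ε • v), η - (η' + ε • v)⟫)
        (nhdsWithin 0 (Ioi 0))
        (nhds (⟪aVec H p η - aVec H p η', η - η'⟫)) := by
      apply Tendsto.inner
      · exact tendsto_const_nhds.sub
          (((aVec_contAt hHC2 hH0 hHpos hHhom hN hp η').tendsto).comp htendε)
      · exact tendsto_const_nhds.sub htendε
    apply le_of_tendsto_of_tendsto hL hR
    filter_upwards [self_mem_nhdsWithin] with ε hε
    exact hineq ε hε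

end S5

theorem statement_5 {N : ℕ} (hN : 2 ≤ N)
    (H : EuclideanSpace ℝ (Fin N) → ℝ)
    (hH0 : H 0 = 0)
    (hHnonneg : ∀ ξ : EuclideanSpace ℝ (Fin N), 0 ≤ H ξ)
    (hHC2 : ContDiffOn ℝ 2 H {(0 : EuclideanSpace ℝ (Fin N))}ᶜ)
    (hHeven : ∀ ξ : EuclideanSpace ℝ (Fin N), H (-ξ) = H ξ)
    (hHpos : ∀ ξ : EuclideanSpace ℝ (Fin N), ξ ≠ 0 → 0 < H ξ)
    (hHhom : ∀ ξ : EuclideanSpace ℝ (Fin N), ξ ≠ 0 → ∀ t : ℝ, 0 < t → H (t • ξ) = t * H ξ)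
    (hHell : ∃ lam : ℝ, 0 < lam ∧ ∀ ξ : EuclideanSpace ℝ (Fin N), H ξ = 1 →
      ∀ ζ : EuclideanSpace ℝ (Fin N), ⟪gradient H ξ, ζ⟫ = 0 →
        lam * ‖ζ‖ ^ 2 ≤ iteratedFDeriv ℝ 2 H ξ ![ζ, ζ])
    (p : ℝ) (hp : 1 < p) :
    ∃ C : ℝ, 0 < C ∧ ∀ η η' : EuclideanSpace ℝ (Fin N), 0 < ‖η‖ + ‖η'‖ →
      C * (‖η‖ + ‖η'‖) ^ (p - 2) * ‖η - η'‖ ^ 2 ≤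
        ⟪aVec H p η - aVec H p η', η - η'⟫ := by
  obtain ⟨lam, hlam, hHell⟩ := hHell
  obtain ⟨c₀, hc₀pos, hc₀⟩ := S5.form_bound hHC2 hH0 hHpos hHhom hlam hHell hN hp
  refine ⟨c₀ * ((1/4) * min 1 ((4:ℝ) ^ (2-p))), ?_, ?_⟩
  · have hminpos : 0 < min 1 ((4:ℝ) ^ (2-p)) :=
      lt_min one_pos (Real.rpow_pos_of_pos (by norm_num) _)
    positivity
  · intro η η' hS
    by_cases hη : η = 0
    · have hη' : η' ≠ 0 := by
        intro h
        rw [hη, h] at hS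
        simp at hS
      have hmain := S5.main_aux hHC2 hH0 hHpos hHhom hN hp hc₀pos hc₀ η' η
        (by rwa [add_comm]) hη'
      have h1 : ⟪aVec H p η' - aVec H p η, η' - η⟫ = ⟪aVec H p η - aVec H p η', η - η'⟫ := by
        rw [show aVec H p η' - aVec H p η = -(aVec H p η - aVec H p η') by abel,
            show η' - η = -(η - η') by abel, inner_neg_neg]
      rw [h1, add_comm ‖η'‖ ‖η‖, norm_sub_rev η' η] at hmain
      exact hmain
    · exact S5.main_aux hHC2 hH0 hHpos hHhom hN hp hc₀pos hc₀ η η' hS hη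
end

section
/- (Proposition 2.1, Lipschitz-type inequality) For every p > 1 there exists a constant C̃_p > 0 such that for all η, η' ∈ ℝ^N with |η| + |η'| > 0 one has |a_p(η) − a_p(η')| ≤ C̃_p (|η| + |η'|)^{p−2} |η − η'|. -/
open scoped RealInnerProductSpace Classical

private lemma hasFDerivAt_comp_const_smul' {E V : Type*} [NormedAddCommGroup E]
    [NormedSpace ℝ E] [NormedAddCommGroup V] [NormedSpace ℝ V] {G : E → V} {x : E} {t : ℝ}
    (hG : DifferentiableAt ℝ G (t • x)) :
    HasFDerivAt (fun y => G (t • y)) (t • fderiv ℝ G (t • x)) x := by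
  have h1 : HasFDerivAt (fun y : E => t • y) (t • ContinuousLinearMap.id ℝ E) x :=
    (hasFDerivAt_id x).const_smul t
  have h2 := hG.hasFDerivAt.comp x h1
  have h3 : (fderiv ℝ G (t • x)).comp (t • ContinuousLinearMap.id ℝ E)
      = t • fderiv ℝ G (t • x) := by
    ext v
    simp
  rw [h3] at h2
  exact h2

private lemma fderiv_hom_aux' {E V : Type*} [NormedAddCommGroup E] [NormedSpace ℝ E]
    [NormedAddCommGroup V] [NormedSpace ℝ V] {G : E → V} {x : E} {t c : ℝ}
    (hG : DifferentiableAt ℝ G (t • x)) (hGx : DifferentiableAt ℝ G x)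
    (hom : ∀ y, G (t • y) = c • G y) :
    t • fderiv ℝ G (t • x) = c • fderiv ℝ G x := by
  have h1 := hasFDerivAt_comp_const_smul' hG
  have h2 : HasFDerivAt (fun y => c • G y) (c • fderiv ℝ G x) x :=
    hGx.hasFDerivAt.const_smul c
  simp only [hom] at h1
  exact h1.unique h2

private lemma rpow_comp_bound' {q r s : ℝ} (hr : 0 < r) (h1 : r / 2 ≤ s) (h2 : s ≤ 2 * r) :
    s ^ q ≤ max ((2:ℝ) ^ (-q)) ((2:ℝ) ^ q) * r ^ q := by
  have hs : 0 < s := lt_of_lt_of_le (by linarith) h1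
  have hrq : (0:ℝ) ≤ r ^ q := Real.rpow_nonneg hr.le q
  rcases le_or_gt 0 q with hq | hq
  · calc s ^ q ≤ (2 * r) ^ q := Real.rpow_le_rpow hs.le h2 hq
      _ = 2 ^ q * r ^ q := Real.mul_rpow (by norm_num) hr.le
      _ ≤ max ((2:ℝ) ^ (-q)) ((2:ℝ) ^ q) * r ^ q :=
        mul_le_mul_of_nonneg_right (le_max_right _ _) hrq
  · have h3 : s ^ q ≤ (r / 2) ^ q :=
      Real.rpow_le_rpow_of_nonpos (by linarith) h1 hq.le
    have h4 : (r / 2) ^ q = 2 ^ (-q) * r ^ q := by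
      rw [div_eq_mul_inv, Real.mul_rpow hr.le (by norm_num), Real.inv_rpow (by norm_num),
        ← Real.rpow_neg (by norm_num)]
      ring
    calc s ^ q ≤ (r / 2) ^ q := h3
      _ = 2 ^ (-q) * r ^ q := h4
      _ ≤ max ((2:ℝ) ^ (-q)) ((2:ℝ) ^ q) * r ^ q :=
        mul_le_mul_of_nonneg_right (le_max_left _ _) hrq

set_option maxHeartbeats 1000000 in
theorem statement_6 {N : ℕ} (hN : 2 ≤ N)
    (H : EuclideanSpace ℝ (Fin N) → ℝ)
    (hH0 : H 0 = 0)
    (hHnonneg : ∀ ξ : EuclideanSpace ℝ (Fin N), 0 ≤ H ξ)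
    (hHC2 : ContDiffOn ℝ 2 H {(0 : EuclideanSpace ℝ (Fin N))}ᶜ)
    (hHeven : ∀ ξ : EuclideanSpace ℝ (Fin N), H (-ξ) = H ξ)
    (hHpos : ∀ ξ : EuclideanSpace ℝ (Fin N), ξ ≠ 0 → 0 < H ξ)
    (hHhom : ∀ ξ : EuclideanSpace ℝ (Fin N), ξ ≠ 0 → ∀ t : ℝ, 0 < t → H (t • ξ) = t * H ξ)
    (hHell : ∃ lam : ℝ, 0 < lam ∧ ∀ ξ : EuclideanSpace ℝ (Fin N), H ξ = 1 →
      ∀ ζ : EuclideanSpace ℝ (Fin N), ⟪gradient H ξ, ζ⟫ = 0 →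
        lam * ‖ζ‖ ^ 2 ≤ iteratedFDeriv ℝ 2 H ξ ![ζ, ζ])
    (p : ℝ) (hp : 1 < p) :
    ∃ C : ℝ, 0 < C ∧ ∀ η η' : EuclideanSpace ℝ (Fin N), 0 < ‖η‖ + ‖η'‖ →
      ‖aVec H p η - aVec H p η'‖ ≤ C * (‖η‖ + ‖η'‖) ^ (p - 2) * ‖η - η'‖ := by
  classical
  have hp1 : (0:ℝ) < p - 1 := by linarith
  have hopen : IsOpen ({(0 : EuclideanSpace ℝ (Fin N))}ᶜ) := isOpen_compl_singleton
  set F : EuclideanSpace ℝ (Fin N) → (EuclideanSpace ℝ (Fin N) →L[ℝ] ℝ) := fun x => (H x) ^ (p - 1) • fderiv ℝ H x with hFdef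
  -- `aVec` in terms of `F`
  have haVec : ∀ x : EuclideanSpace ℝ (Fin N), aVec H p x = (InnerProductSpace.toDual ℝ (EuclideanSpace ℝ (Fin N))).symm (F x) := by
    intro x
    by_cases hx : x = 0
    · subst hx
      simp [aVec, hFdef, hH0, Real.zero_rpow (by linarith : p - 1 ≠ 0)]
    · simp only [aVec, if_neg hx, hFdef]
      rw [gradient, map_smulₛₗ]
      simp
  have hnorm : ∀ x y : EuclideanSpace ℝ (Fin N), ‖aVec H p x - aVec H p y‖ = ‖F x - F y‖ := by
    intro x y
    rw [haVec, haVec, ← map_sub, LinearIsometryEquiv.norm_map]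
  -- differentiability facts
  have hHct : ∀ x : EuclideanSpace ℝ (Fin N), x ≠ 0 → ContDiffAt ℝ 2 H x := fun x hx =>
    hHC2.contDiffAt (hopen.mem_nhds hx)
  have hHd : ∀ x : EuclideanSpace ℝ (Fin N), x ≠ 0 → DifferentiableAt ℝ H x := fun x hx =>
    (hHct x hx).differentiableAt (by norm_num)
  have hFct : ∀ x : EuclideanSpace ℝ (Fin N), x ≠ 0 → ContDiffAt ℝ 1 F x := by
    intro x hx
    have h1 : ContDiffAt ℝ 1 (fun y => H y ^ (p - 1)) x :=
      ((hHct x hx).of_le (by norm_num)).rpow_const_of_ne (hHpos x hx).ne'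
    have h2 : ContDiffAt ℝ 1 (fderiv ℝ H) x := (hHct x hx).fderiv_right (by norm_num)
    exact h1.smul h2
  have hFd : ∀ x : EuclideanSpace ℝ (Fin N), x ≠ 0 → DifferentiableAt ℝ F x := fun x hx =>
    (hFct x hx).differentiableAt one_ne_zero
  have hFOn : ContDiffOn ℝ 1 F {(0 : EuclideanSpace ℝ (Fin N))}ᶜ := fun x hx => (hFct x hx).contDiffWithinAt
  -- homogeneity of H everywhere
  have hHhom0 : ∀ x : EuclideanSpace ℝ (Fin N), ∀ t : ℝ, 0 < t → H (t • x) = t * H x := by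
    intro x t ht
    by_cases hx : x = 0
    · subst hx; simp [hH0]
    · exact hHhom x hx t ht
  -- homogeneity of fderiv H
  have hdH : ∀ x : EuclideanSpace ℝ (Fin N), x ≠ 0 → ∀ t : ℝ, 0 < t → fderiv ℝ H (t • x) = fderiv ℝ H x := by
    intro x hx t ht
    have htx : t • x ≠ 0 := smul_ne_zero ht.ne' hx
    have h := fderiv_hom_aux' (G := H) (x := x) (t := t) (c := t)
      (hHd _ htx) (hHd _ hx) (fun y => by rw [hHhom0 y t ht, smul_eq_mul])
    exact smul_right_injective (EuclideanSpace ℝ (Fin N) →L[ℝ] ℝ) ht.ne' h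
  -- F 0 = 0 and homogeneity of F
  have hF0 : F 0 = 0 := by
    simp [hFdef, hH0, Real.zero_rpow (by linarith : p - 1 ≠ 0)]
  have hFhom : ∀ x : EuclideanSpace ℝ (Fin N), ∀ t : ℝ, 0 < t → F (t • x) = t ^ (p - 1) • F x := by
    intro x t ht
    by_cases hx : x = 0
    · subst hx; simp [hF0]
    · simp only [hFdef, hHhom x hx t ht, hdH x hx t ht]
      rw [Real.mul_rpow ht.le (hHnonneg x), mul_smul]
  -- homogeneity of fderiv F
  have hdF : ∀ x : EuclideanSpace ℝ (Fin N), x ≠ 0 → ∀ t : ℝ, 0 < t →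
      fderiv ℝ F (t • x) = t ^ (p - 2) • fderiv ℝ F x := by
    intro x hx t ht
    have htx : t • x ≠ 0 := smul_ne_zero ht.ne' hx
    have h := fderiv_hom_aux' (G := F) (x := x) (t := t) (c := t ^ (p - 1))
      (hFd _ htx) (hFd _ hx) (fun y => hFhom y t ht)
    have ht1 : t ^ (p - 1) = t * t ^ (p - 2) := by
      rw [show p - 1 = (p - 2) + 1 by ring, Real.rpow_add_one ht.ne', mul_comm]
    have h2 : fderiv ℝ F (t • x) = (t⁻¹ * t ^ (p - 1)) • fderiv ℝ F x := by
      rw [← smul_smul, ← h, smul_smul, inv_mul_cancel₀ ht.ne', one_smul]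
    rw [h2, ht1, show t⁻¹ * (t * t ^ (p - 2)) = t ^ (p - 2) by field_simp]
  -- bounds on the unit sphere
  have hsub : Metric.sphere (0 : EuclideanSpace ℝ (Fin N)) 1 ⊆ {(0 : EuclideanSpace ℝ (Fin N))}ᶜ := by
    intro x hx
    simp only [Metric.mem_sphere, dist_zero_right] at hx
    simp only [Set.mem_compl_iff, Set.mem_singleton_iff]
    intro h; rw [h] at hx; simp at hx
  obtain ⟨M0, hM0⟩ := (isCompact_sphere (0 : EuclideanSpace ℝ (Fin N)) 1).exists_bound_of_continuousOn
    (hFOn.continuousOn.mono hsub)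
  obtain ⟨K0, hK0⟩ := (isCompact_sphere (0 : EuclideanSpace ℝ (Fin N)) 1).exists_bound_of_continuousOn
    ((hFOn.continuousOn_fderiv_of_isOpen hopen le_rfl).mono hsub)
  set M : ℝ := max M0 1 with hMdef
  set K : ℝ := max K0 1 with hKdef
  have hMpos : 0 < M := lt_of_lt_of_le one_pos (le_max_right _ _)
  have hKpos : 0 < K := lt_of_lt_of_le one_pos (le_max_right _ _)
  -- scaling to the sphere
  have hsphere : ∀ x : EuclideanSpace ℝ (Fin N), x ≠ 0 → (‖x‖⁻¹ • x ∈ Metric.sphere (0 : EuclideanSpace ℝ (Fin N)) 1) ∧ ‖x‖ • (‖x‖⁻¹ • x) = x ∧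
      (‖x‖⁻¹ • x : EuclideanSpace ℝ (Fin N)) ≠ 0 := by
    intro x hx
    have hxn : ‖x‖ ≠ 0 := norm_ne_zero_iff.mpr hx
    constructor
    · simp only [Metric.mem_sphere, dist_zero_right, norm_smul, norm_inv, norm_norm]
      exact inv_mul_cancel₀ hxn
    constructor
    · rw [smul_smul, mul_inv_cancel₀ hxn, one_smul]
    · exact smul_ne_zero (inv_ne_zero hxn) hx
  have hM : ∀ x : EuclideanSpace ℝ (Fin N), ‖F x‖ ≤ M * ‖x‖ ^ (p - 1) := by
    intro x
    by_cases hx : x = 0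
    · subst hx
      simp [hF0, Real.zero_rpow (by linarith : p - 1 ≠ 0)]
    · obtain ⟨hu, hxu, hune⟩ := hsphere x hx
      have hxn : (0:ℝ) < ‖x‖ := norm_pos_iff.mpr hx
      have : F x = ‖x‖ ^ (p - 1) • F (‖x‖⁻¹ • x) := by
        conv_lhs => rw [← hxu]
        exact hFhom _ _ hxn
      rw [this, @norm_smul ℝ _ _ _ _ _ (‖x‖ ^ (p - 1)) (F (‖x‖⁻¹ • x)), Real.norm_eq_abs,
        abs_of_nonneg (Real.rpow_nonneg hxn.le _), mul_comm]
      exact mul_le_mul_of_nonneg_right (le_trans (hM0 _ hu) (le_max_left _ _))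
        (Real.rpow_nonneg hxn.le _)
  have hK : ∀ x : EuclideanSpace ℝ (Fin N), x ≠ 0 → ‖fderiv ℝ F x‖ ≤ K * ‖x‖ ^ (p - 2) := by
    intro x hx
    obtain ⟨hu, hxu, hune⟩ := hsphere x hx
    have hxn : (0:ℝ) < ‖x‖ := norm_pos_iff.mpr hx
    have : fderiv ℝ F x = ‖x‖ ^ (p - 2) • fderiv ℝ F (‖x‖⁻¹ • x) := by
      conv_lhs => rw [← hxu]
      exact hdF _ hune _ hxn
    rw [this, @norm_smul ℝ _ _ _ _ NormedSpace.toNormSMulClass (‖x‖ ^ (p - 2)) (fderiv ℝ F (‖x‖⁻¹ • x)), Real.norm_eq_abs,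
      abs_of_nonneg (Real.rpow_nonneg hxn.le _), mul_comm]
    exact mul_le_mul_of_nonneg_right (le_trans (hK0 _ hu) (le_max_left _ _))
      (Real.rpow_nonneg hxn.le _)
  -- the constant
  set c0 : ℝ := max ((2:ℝ) ^ (-(p - 2))) ((2:ℝ) ^ (p - 2)) with hc0def
  have hc0 : 0 < c0 := lt_of_lt_of_le (Real.rpow_pos_of_pos two_pos _) (le_max_right _ _)
  set C : ℝ := max (4 * M * c0) (K * c0 * c0) with hCdef
  have hC : 0 < C := lt_of_lt_of_le (by positivity) (le_max_left (4 * M * c0) _)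
  refine ⟨C, hC, ?_⟩
  -- the key asymmetric estimate
  have key : ∀ η η' : EuclideanSpace ℝ (Fin N), ‖η'‖ ≤ ‖η‖ → 0 < ‖η‖ + ‖η'‖ →
      ‖F η - F η'‖ ≤ C * (‖η‖ + ‖η'‖) ^ (p - 2) * ‖η - η'‖ := by
    intro η η' hle hpos
    have hr : (0:ℝ) < ‖η‖ := by
      by_contra h
      push_neg at h
      have h1 : ‖η‖ = 0 := le_antisymm h (norm_nonneg _)
      have h2 : ‖η'‖ = 0 := le_antisymm (h1 ▸ hle) (norm_nonneg _)
      rw [h1, h2] at hpos; linarith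
    have hη : η ≠ 0 := norm_pos_iff.mp hr
    have hS1 : ‖η‖ ≤ ‖η‖ + ‖η'‖ := le_add_of_nonneg_right (norm_nonneg _)
    have hS2 : ‖η‖ + ‖η'‖ ≤ 2 * ‖η‖ := by linarith
    have hSpos : (0:ℝ) < ‖η‖ + ‖η'‖ := hpos
    have hrS : ‖η‖ ^ (p - 2) ≤ c0 * (‖η‖ + ‖η'‖) ^ (p - 2) :=
      rpow_comp_bound' hSpos (by linarith) (by linarith)
    have hSnn : (0:ℝ) ≤ (‖η‖ + ‖η'‖) ^ (p - 2) := Real.rpow_nonneg hSpos.le _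
    have hr1 : ‖η‖ ^ (p - 1) = ‖η‖ ^ (p - 2) * ‖η‖ := by
      rw [show p - 1 = (p - 2) + 1 by ring, Real.rpow_add_one hr.ne']
    have hrp2 : (0:ℝ) ≤ ‖η‖ ^ (p - 2) := Real.rpow_nonneg hr.le _
    rcases le_or_gt ‖η‖ (2 * ‖η - η'‖) with hcase | hcase
    · -- far apart: use the triangle inequality and the growth bound
      calc ‖F η - F η'‖ ≤ ‖F η‖ + ‖F η'‖ := norm_sub_le _ _
        _ ≤ M * ‖η‖ ^ (p - 1) + M * ‖η'‖ ^ (p - 1) := add_le_add (hM η) (hM η')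
        _ ≤ M * ‖η‖ ^ (p - 1) + M * ‖η‖ ^ (p - 1) := by
            gcongr
        _ = 2 * M * (‖η‖ ^ (p - 2) * ‖η‖) := by rw [hr1]; ring
        _ ≤ 2 * M * (‖η‖ ^ (p - 2) * (2 * ‖η - η'‖)) := by gcongr
        _ = 4 * M * ‖η‖ ^ (p - 2) * ‖η - η'‖ := by ring
        _ ≤ 4 * M * (c0 * (‖η‖ + ‖η'‖) ^ (p - 2)) * ‖η - η'‖ := by gcongr
        _ = 4 * M * c0 * (‖η‖ + ‖η'‖) ^ (p - 2) * ‖η - η'‖ := by ring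
        _ ≤ C * (‖η‖ + ‖η'‖) ^ (p - 2) * ‖η - η'‖ := by
            gcongr
            exact le_max_left _ _
    · -- close: mean value inequality on the segment
      have hseg : ∀ x ∈ segment ℝ η' η, ‖η‖ / 2 ≤ ‖x‖ ∧ ‖x‖ ≤ 2 * ‖η‖ := by
        intro x hx
        have hball : segment ℝ η' η ⊆ Metric.closedBall η ‖η - η'‖ := by
          apply (convex_closedBall η ‖η - η'‖).segment_subset
          · simp only [Metric.mem_closedBall, dist_eq_norm]
            rw [norm_sub_rev]
          · simp [Metric.mem_closedBall]
        have hdist : ‖x - η‖ ≤ ‖η - η'‖ := by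
          have := hball hx
          simpa [Metric.mem_closedBall, dist_eq_norm] using this
        have habs : |‖x‖ - ‖η‖| ≤ ‖x - η‖ := abs_norm_sub_norm_le x η
        rw [abs_le] at habs
        constructor <;> linarith [habs.1, habs.2]
      have hne0 : ∀ x ∈ segment ℝ η' η, x ≠ 0 := by
        intro x hx
        have := (hseg x hx).1
        have : (0:ℝ) < ‖x‖ := by linarith
        exact norm_pos_iff.mp this
      have hbound : ∀ x ∈ segment ℝ η' η, ‖fderiv ℝ F x‖ ≤ K * (c0 * ‖η‖ ^ (p - 2)) := by
        intro x hx
        obtain ⟨h1, h2⟩ := hseg x hx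
        calc ‖fderiv ℝ F x‖ ≤ K * ‖x‖ ^ (p - 2) := hK x (hne0 x hx)
          _ ≤ K * (c0 * ‖η‖ ^ (p - 2)) := by
              gcongr
              exact rpow_comp_bound' hr h1 h2
      have hmvt := (convex_segment η' η).norm_image_sub_le_of_norm_fderiv_le
        (fun x hx => hFd x (hne0 x hx)) hbound
        (left_mem_segment ℝ η' η) (right_mem_segment ℝ η' η)
      calc ‖F η - F η'‖ ≤ K * (c0 * ‖η‖ ^ (p - 2)) * ‖η - η'‖ := hmvt
        _ ≤ K * (c0 * (c0 * (‖η‖ + ‖η'‖) ^ (p - 2))) * ‖η - η'‖ := by gcongr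
        _ = K * c0 * c0 * (‖η‖ + ‖η'‖) ^ (p - 2) * ‖η - η'‖ := by ring
        _ ≤ C * (‖η‖ + ‖η'‖) ^ (p - 2) * ‖η - η'‖ := by
            gcongr
            exact le_max_right _ _
  -- conclude, by symmetry
  intro η η' hpos
  rcases le_total ‖η'‖ ‖η‖ with h | h
  · rw [hnorm]
    exact key η η' h hpos
  · have h2 := key η' η h (by linarith)
    rw [hnorm, norm_sub_rev]
    calc ‖F η' - F η‖ ≤ C * (‖η'‖ + ‖η‖) ^ (p - 2) * ‖η' - η‖ := h2
      _ = C * (‖η‖ + ‖η'‖) ^ (p - 2) * ‖η - η'‖ := by rw [add_comm, norm_sub_rev]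
end

section
/- (Proposition 2.1, strong convexity inequality for 1 < p < 2) For every p with 1 < p < 2 there exists a constant Ĉ_p > 0 such that for all η, η' ∈ ℝ^N with |η| + |η'| > 0 one has H(η)^p ≥ H(η')^p + p a_p(η') · (η − η') + Ĉ_p (H(η) + H(η'))^{p−2} H(η − η')². -/
open scoped RealInnerProductSpace Classical

abbrev Eu (N : ℕ) := EuclideanSpace ℝ (Fin N)

section Aux
variable {N : ℕ}

lemma gradInner (f : Eu N → ℝ) (x v : Eu N) : ⟪gradient f x, v⟫ = fderiv ℝ f x v := by
  rw [gradient]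
  exact InnerProductSpace.toDual_symm_apply

variable {H : Eu N → ℝ}

lemma hDiffAt (hHC2 : ContDiffOn ℝ 2 H {(0 : Eu N)}ᶜ) {ξ : Eu N} (hξ : ξ ≠ 0) :
    DifferentiableAt ℝ H ξ :=
  (hHC2.contDiffAt ((isOpen_compl_singleton).mem_nhds hξ)).differentiableAt two_ne_zero

lemma hPhiDiffAt (hHC2 : ContDiffOn ℝ 2 H {(0 : Eu N)}ᶜ) {ξ : Eu N} (hξ : ξ ≠ 0) :
    DifferentiableAt ℝ (fderiv ℝ H) ξ := by
  have h2 : ContDiffOn ℝ 1 (fderiv ℝ H) {(0 : Eu N)}ᶜ :=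
    hHC2.fderiv_of_isOpen isOpen_compl_singleton (by norm_num)
  exact (h2.contDiffAt ((isOpen_compl_singleton).mem_nhds hξ)).differentiableAt one_ne_zero

lemma hHomExt (hH0 : H 0 = 0)
    (hHhom : ∀ ξ : Eu N, ξ ≠ 0 → ∀ t : ℝ, 0 < t → H (t • ξ) = t * H ξ)
    {t : ℝ} (ht : 0 < t) : ∀ x : Eu N, H (t • x) = t * H x := by
  intro x
  rcases eq_or_ne x 0 with rfl | hx
  · simp [hH0]
  · exact hHhom x hx t ht

lemma fderivHom (hH0 : H 0 = 0) (hHC2 : ContDiffOn ℝ 2 H {(0 : Eu N)}ᶜ)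
    (hHhom : ∀ ξ : Eu N, ξ ≠ 0 → ∀ t : ℝ, 0 < t → H (t • ξ) = t * H ξ)
    {ξ : Eu N} (hξ : ξ ≠ 0) {t : ℝ} (ht : 0 < t) :
    fderiv ℝ H (t • ξ) = fderiv ℝ H ξ := by
  have htξ : t • ξ ≠ 0 := smul_ne_zero (ne_of_gt ht) hξ
  have hs : HasFDerivAt (fun x : Eu N => t • x) (t • ContinuousLinearMap.id ℝ (Eu N)) ξ :=
    (hasFDerivAt_id ξ).const_smul t
  have h1 : HasFDerivAt (fun x : Eu N => H (t • x))
      ((fderiv ℝ H (t • ξ)).comp (t • ContinuousLinearMap.id ℝ (Eu N))) ξ :=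
    ((hDiffAt hHC2 htξ).hasFDerivAt).comp ξ hs
  have h2 : (fun x : Eu N => H (t • x)) = fun x => t * H x :=
    funext (hHomExt hH0 hHhom ht)
  rw [h2] at h1
  have h3 : HasFDerivAt (fun x : Eu N => t * H x) (t • fderiv ℝ H ξ) ξ :=
    ((hDiffAt hHC2 hξ).hasFDerivAt).const_mul t
  have h4 := h1.unique h3
  ext v
  have h5 : (fderiv ℝ H (t • ξ)) (t • v) = t * (fderiv ℝ H ξ) v := by
    have := congrFun (congrArg DFunLike.coe h4) v
    simpa using this
  rw [map_smul, smul_eq_mul] at h5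
  exact mul_left_cancel₀ (ne_of_gt ht) h5

lemma euler (hH0 : H 0 = 0) (hHC2 : ContDiffOn ℝ 2 H {(0 : Eu N)}ᶜ)
    (hHhom : ∀ ξ : Eu N, ξ ≠ 0 → ∀ t : ℝ, 0 < t → H (t • ξ) = t * H ξ)
    {ξ : Eu N} (hξ : ξ ≠ 0) : fderiv ℝ H ξ ξ = H ξ := by
  have hc : HasDerivAt (fun t : ℝ => t • ξ) ξ 1 := by
    simpa using (hasDerivAt_id (1 : ℝ)).smul_const ξ
  have h1 : HasDerivAt (fun t : ℝ => H (t • ξ)) (fderiv ℝ H ξ ξ) 1 := by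
    have h0 : HasFDerivAt H (fderiv ℝ H ξ) ((1:ℝ) • ξ) := by
      simpa using (hDiffAt hHC2 hξ).hasFDerivAt
    have := h0.comp_hasDerivAt 1 hc
    simpa [Function.comp_def] using this
  have h2 : (fun t : ℝ => H (t • ξ)) =ᶠ[nhds (1 : ℝ)] fun t => t * H ξ := by
    filter_upwards [lt_mem_nhds (show (0:ℝ) < 1 by norm_num)] with t ht
    exact hHhom ξ hξ t ht
  have h3 : HasDerivAt (fun t : ℝ => t * H ξ) (fderiv ℝ H ξ ξ) 1 :=
    h1.congr_of_eventuallyEq h2.symm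
  have h4 : HasDerivAt (fun t : ℝ => t * H ξ) (H ξ) 1 := by
    simpa using (hasDerivAt_id (1 : ℝ)).mul_const (H ξ)
  exact h3.unique h4

lemma fderivNeg (hHC2 : ContDiffOn ℝ 2 H {(0 : Eu N)}ᶜ)
    (hHeven : ∀ ξ : Eu N, H (-ξ) = H ξ)
    {ξ : Eu N} (hξ : ξ ≠ 0) (v : Eu N) : fderiv ℝ H (-ξ) v = - fderiv ℝ H ξ v := by
  have hξ' : -ξ ≠ 0 := neg_ne_zero.mpr hξ
  have hs : HasFDerivAt (fun x : Eu N => -x) (-ContinuousLinearMap.id ℝ (Eu N)) ξ :=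
    (hasFDerivAt_id ξ).neg
  have h1 : HasFDerivAt (fun x : Eu N => H (-x))
      ((fderiv ℝ H (-ξ)).comp (-ContinuousLinearMap.id ℝ (Eu N))) ξ :=
    ((hDiffAt hHC2 hξ').hasFDerivAt).comp ξ hs
  have h2 : (fun x : Eu N => H (-x)) = H := funext hHeven
  rw [h2] at h1
  have h4 := h1.unique (hDiffAt hHC2 hξ).hasFDerivAt
  have := congrFun (congrArg DFunLike.coe h4) v
  simp only [ContinuousLinearMap.coe_comp', Function.comp_apply,
    ContinuousLinearMap.neg_apply, ContinuousLinearMap.coe_id', id_eq] at this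
  have h5 := this.symm
  -- this : fderiv H (-ξ) (-v) = fderiv H ξ v ; want fderiv H (-ξ) v = - fderiv H ξ v
  have h6 : (fderiv ℝ H (-ξ)) v = - (fderiv ℝ H (-ξ)) (-v) := by
    rw [map_neg]; ring
  rw [h6, this]

end Aux

section Aux2
variable {N : ℕ} {H : Eu N → ℝ}

lemma hessHom (hH0 : H 0 = 0) (hHC2 : ContDiffOn ℝ 2 H {(0 : Eu N)}ᶜ)
    (hHhom : ∀ ξ : Eu N, ξ ≠ 0 → ∀ t : ℝ, 0 < t → H (t • ξ) = t * H ξ)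
    {ξ : Eu N} (hξ : ξ ≠ 0) {t : ℝ} (ht : 0 < t) (u v : Eu N) :
    fderiv ℝ (fderiv ℝ H) (t • ξ) u v = t⁻¹ * fderiv ℝ (fderiv ℝ H) ξ u v := by
  have htξ : t • ξ ≠ 0 := smul_ne_zero (ne_of_gt ht) hξ
  have hs : HasFDerivAt (fun x : Eu N => t • x) (t • ContinuousLinearMap.id ℝ (Eu N)) ξ :=
    (hasFDerivAt_id ξ).const_smul t
  have h1 : HasFDerivAt (fun x : Eu N => fderiv ℝ H (t • x))
      ((fderiv ℝ (fderiv ℝ H) (t • ξ)).comp (t • ContinuousLinearMap.id ℝ (Eu N))) ξ :=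
    ((hPhiDiffAt hHC2 htξ).hasFDerivAt).comp ξ hs
  have h2 : (fun x : Eu N => fderiv ℝ H (t • x)) =ᶠ[nhds ξ] fderiv ℝ H := by
    filter_upwards [isOpen_compl_singleton.mem_nhds hξ] with x hx
    exact fderivHom hH0 hHC2 hHhom hx ht
  have h3 : HasFDerivAt (fderiv ℝ H)
      ((fderiv ℝ (fderiv ℝ H) (t • ξ)).comp (t • ContinuousLinearMap.id ℝ (Eu N))) ξ :=
    h1.congr_of_eventuallyEq h2.symm
  have h4 := h3.unique (hPhiDiffAt hHC2 hξ).hasFDerivAt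
  have h5 := congrFun (congrArg DFunLike.coe (congrFun (congrArg DFunLike.coe h4) u)) v
  simp only [ContinuousLinearMap.coe_comp', Function.comp_apply,
    ContinuousLinearMap.smul_apply, ContinuousLinearMap.coe_id', id_eq, map_smul] at h5
  -- h5 : t • (fderiv (fderiv H) (t•ξ)) u v = fderiv (fderiv H) ξ u v  (roughly)
  rw [← h5]
  simp only [ContinuousLinearMap.smul_apply, smul_eq_mul]
  field_simp

lemma hessRadial (hH0 : H 0 = 0) (hHC2 : ContDiffOn ℝ 2 H {(0 : Eu N)}ᶜ)
    (hHhom : ∀ ξ : Eu N, ξ ≠ 0 → ∀ t : ℝ, 0 < t → H (t • ξ) = t * H ξ)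
    {ξ : Eu N} (hξ : ξ ≠ 0) :
    fderiv ℝ (fderiv ℝ H) ξ ξ = 0 := by
  have hc : HasDerivAt (fun t : ℝ => t • ξ) ξ 1 := by
    simpa using (hasDerivAt_id (1 : ℝ)).smul_const ξ
  have h0 : HasFDerivAt (fderiv ℝ H) (fderiv ℝ (fderiv ℝ H) ξ) ((1:ℝ) • ξ) := by
    simpa using (hPhiDiffAt hHC2 hξ).hasFDerivAt
  have h1 : HasDerivAt (fun t : ℝ => fderiv ℝ H (t • ξ)) (fderiv ℝ (fderiv ℝ H) ξ ξ) 1 := by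
    have := h0.comp_hasDerivAt 1 hc
    simpa [Function.comp_def] using this
  have h2 : (fun t : ℝ => fderiv ℝ H (t • ξ)) =ᶠ[nhds (1:ℝ)]
      fun _ => fderiv ℝ H ξ := by
    filter_upwards [lt_mem_nhds (show (0:ℝ) < 1 by norm_num)] with t ht
    exact fderivHom hH0 hHC2 hHhom hξ ht
  have h3 : HasDerivAt (fun _ : ℝ => fderiv ℝ H ξ) (fderiv ℝ (fderiv ℝ H) ξ ξ) 1 :=
    h1.congr_of_eventuallyEq h2.symm
  exact h3.unique (hasDerivAt_const 1 _)

lemma hessSymm (hHC2 : ContDiffOn ℝ 2 H {(0 : Eu N)}ᶜ)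
    {ξ : Eu N} (hξ : ξ ≠ 0) (u v : Eu N) :
    fderiv ℝ (fderiv ℝ H) ξ u v = fderiv ℝ (fderiv ℝ H) ξ v u :=
  ((hHC2.contDiffAt (isOpen_compl_singleton.mem_nhds hξ)).isSymmSndFDerivAt (by simp)) u v

lemma iteratedEq (ξ ζ : Eu N) :
    iteratedFDeriv ℝ 2 H ξ ![ζ, ζ] = fderiv ℝ (fderiv ℝ H) ξ ζ ζ := by
  rw [iteratedFDeriv_two_apply]
  simp

lemma normEquiv (hN : 2 ≤ N) (hH0 : H 0 = 0) (hHC2 : ContDiffOn ℝ 2 H {(0 : Eu N)}ᶜ)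
    (hHpos : ∀ ξ : Eu N, ξ ≠ 0 → 0 < H ξ)
    (hHhom : ∀ ξ : Eu N, ξ ≠ 0 → ∀ t : ℝ, 0 < t → H (t • ξ) = t * H ξ) :
    ∃ m M : ℝ, 0 < m ∧ 0 < M ∧ ∀ ξ : Eu N, m * ‖ξ‖ ≤ H ξ ∧ H ξ ≤ M * ‖ξ‖ := by
  have hsub : (Metric.sphere (0 : Eu N) 1) ⊆ {(0 : Eu N)}ᶜ := by
    intro x hx
    simp only [Metric.mem_sphere, dist_zero_right] at hx
    simp only [Set.mem_compl_iff, Set.mem_singleton_iff]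
    intro h0
    rw [h0] at hx; simp at hx
  have hcont : ContinuousOn H (Metric.sphere (0 : Eu N) 1) :=
    (hHC2.continuousOn).mono hsub
  have hne : (Metric.sphere (0 : Eu N) 1).Nonempty := by
    refine ⟨EuclideanSpace.single (⟨0, by omega⟩ : Fin N) (1:ℝ), ?_⟩
    simp [EuclideanSpace.norm_single]
  obtain ⟨a, ha, hamin⟩ := (isCompact_sphere (0:Eu N) 1).exists_isMinOn hne hcont
  obtain ⟨b, hb, hbmax⟩ := (isCompact_sphere (0:Eu N) 1).exists_isMaxOn hne hcont
  have hane : a ≠ 0 := fun h => by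
    have := hsub ha; rw [h] at this; simp at this
  refine ⟨H a, H b, hHpos a hane, ?_, ?_⟩
  · have hbne : b ≠ 0 := fun h => by
      have := hsub hb; rw [h] at this; simp at this
    exact hHpos b hbne
  · intro ξ
    rcases eq_or_ne ξ 0 with rfl | hξ
    · simp [hH0]
    · have hn : (0:ℝ) < ‖ξ‖ := norm_pos_iff.mpr hξ
      have hu : (‖ξ‖⁻¹ • ξ) ∈ Metric.sphere (0 : Eu N) 1 := by
        simp [norm_smul, abs_of_pos (inv_pos.mpr hn), inv_mul_cancel₀ (ne_of_gt hn)]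
      have hXi : H ξ = ‖ξ‖ * H (‖ξ‖⁻¹ • ξ) := by
        have := hHhom (‖ξ‖⁻¹ • ξ) (by
          intro h; apply hξ
          have : ξ = ‖ξ‖ • (‖ξ‖⁻¹ • ξ) := by
            rw [smul_smul, mul_inv_cancel₀ (ne_of_gt hn), one_smul]
          rw [this, h, smul_zero]) ‖ξ‖ hn
        rw [← this, smul_smul, mul_inv_cancel₀ (ne_of_gt hn), one_smul]
      constructor
      · rw [hXi, mul_comm (H a)]
        exact mul_le_mul_of_nonneg_left (hamin hu) (le_of_lt hn)
      · rw [hXi, mul_comm (H b)]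
        exact mul_le_mul_of_nonneg_left (hbmax hu) (le_of_lt hn)

end Aux2

section Aux3
variable {N : ℕ} {H : Eu N → ℝ}

set_option maxHeartbeats 2000000 in
lemma hessBound (hH0 : H 0 = 0) (hHC2 : ContDiffOn ℝ 2 H {(0 : Eu N)}ᶜ)
    (hHpos : ∀ ξ : Eu N, ξ ≠ 0 → 0 < H ξ)
    (hHhom : ∀ ξ : Eu N, ξ ≠ 0 → ∀ t : ℝ, 0 < t → H (t • ξ) = t * H ξ)
    {lam m : ℝ} (hlam : 0 < lam)
    (hEll : ∀ ξ : Eu N, H ξ = 1 → ∀ ζ : Eu N, ⟪gradient H ξ, ζ⟫ = 0 →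
        lam * ‖ζ‖ ^ 2 ≤ iteratedFDeriv ℝ 2 H ξ ![ζ, ζ])
    (hm : 0 < m) (hmle : ∀ ξ : Eu N, m * ‖ξ‖ ≤ H ξ)
    {p : ℝ} (hp1 : 1 < p)
    {ξ : Eu N} (hξ : ξ ≠ 0) (v : Eu N) :
    min (p*lam/2) (p*(p-1)*m^2/2) * (H ξ)^(p-2) * ‖v‖^2 ≤
      p*(p-1)*(H ξ)^(p-2)*(fderiv ℝ H ξ v)^2
        + p*(H ξ)^(p-1)*(fderiv ℝ (fderiv ℝ H) ξ v v) := by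
  set h := H ξ with hh_def
  have hh : 0 < h := hHpos ξ hξ
  set fd := fderiv ℝ H ξ v with hfd_def
  set α : ℝ := fd / h with hα_def
  set w : Eu N := v - α • ξ with hw_def
  have hveq : v = w + α • ξ := by rw [hw_def]; abel
  have hweq : fderiv ℝ H ξ w = 0 := by
    rw [hw_def, map_sub, map_smul, euler hH0 hHC2 hHhom hξ]
    simp only [smul_eq_mul, hα_def]
    field_simp
    rw [hfd_def, hh_def]; ring
  set Ψ := fderiv ℝ (fderiv ℝ H) with hΨ_def
  have hrad : Ψ ξ ξ = 0 := hessRadial hH0 hHC2 hHhom hξ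
  have e1 : ∀ z : Eu N, Ψ ξ v z = Ψ ξ w z := by
    intro z
    rw [hveq]
    rw [map_add, map_smul]
    simp [hrad]
  have hΨvv : Ψ ξ v v = Ψ ξ w w := by
    rw [e1 v, hessSymm hHC2 hξ w v, e1 w]
  -- normalize
  set σ : Eu N := h⁻¹ • ξ with hσ_def
  have hσne : σ ≠ 0 := smul_ne_zero (inv_ne_zero (ne_of_gt hh)) hξ
  have hσ1 : H σ = 1 := by
    rw [hσ_def, hHhom ξ hξ h⁻¹ (inv_pos.mpr hh), inv_mul_cancel₀ (ne_of_gt hh)]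
  have hξσ : ξ = h • σ := by
    rw [hσ_def, smul_smul, mul_inv_cancel₀ (ne_of_gt hh), one_smul]
  have hfdσ : fderiv ℝ H σ = fderiv ℝ H ξ := by
    conv_rhs => rw [hξσ]
    exact (fderivHom hH0 hHC2 hHhom hσne hh).symm
  have horth : ⟪gradient H σ, w⟫ = 0 := by
    rw [gradInner, hfdσ, hweq]
  have hEllw := hEll σ hσ1 w horth
  rw [iteratedEq] at hEllw
  have hΨww : Ψ ξ w w = h⁻¹ * fderiv ℝ (fderiv ℝ H) σ w w := by
    conv_lhs => rw [hξσ]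
    exact hessHom hH0 hHC2 hHhom hσne hh w w
  have hΨlow : lam * ‖w‖^2 * h⁻¹ ≤ Ψ ξ v v := by
    rw [hΨvv, hΨww]
    have := mul_le_mul_of_nonneg_right hEllw (le_of_lt (inv_pos.mpr hh))
    linarith [this]
  -- norm estimates
  have hnv : ‖v‖^2 ≤ 2*‖w‖^2 + 2*α^2*‖ξ‖^2 := by
    have h1 : ‖v‖ ≤ ‖w‖ + ‖α • ξ‖ := by rw [hveq]; exact norm_add_le _ _
    have h2 : ‖α • ξ‖ = |α| * ‖ξ‖ := by rw [norm_smul]; rfl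
    have h3 : ‖v‖ ≤ ‖w‖ + |α| * ‖ξ‖ := by rw [← h2]; exact h1
    have h4 : (0:ℝ) ≤ ‖v‖ := norm_nonneg _
    have h5 : ‖v‖^2 ≤ (‖w‖ + |α| * ‖ξ‖)^2 := pow_le_pow_left₀ h4 h3 2
    have h6 : (‖w‖ + |α| * ‖ξ‖)^2 ≤ 2*‖w‖^2 + 2*(|α| * ‖ξ‖)^2 := by
      nlinarith [sq_nonneg (‖w‖ - |α| * ‖ξ‖)]
    have h7 : (|α| * ‖ξ‖)^2 = α^2 * ‖ξ‖^2 := by rw [mul_pow, sq_abs]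
    linarith
  have hξn : ‖ξ‖ ≤ h / m := by
    have := hmle ξ
    rw [← hh_def] at this
    rw [le_div_iff₀ hm]
    linarith [this]
  have hα2 : α^2 * ‖ξ‖^2 ≤ fd^2 / m^2 := by
    have h1 : α^2 = fd^2 / h^2 := by rw [hα_def, div_pow]
    have h2 : ‖ξ‖^2 ≤ (h/m)^2 := by
      have := sq_le_sq' (by nlinarith [norm_nonneg ξ, hξn, div_pos hh hm]) hξn
      simpa using this
    calc α^2 * ‖ξ‖^2 ≤ α^2 * (h/m)^2 := by
          apply mul_le_mul_of_nonneg_left h2 (sq_nonneg α)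
      _ = fd^2 / h^2 * (h/m)^2 := by rw [h1]
      _ = fd^2 / m^2 := by field_simp
  -- rpow facts
  have hA : (0:ℝ) < h^(p-2) := Real.rpow_pos_of_pos hh _
  have hpow : h^(p-1) * h⁻¹ = h^(p-2) := by
    rw [show p-2 = (p-1) + (-1) by ring, Real.rpow_add hh, Real.rpow_neg_one]
  have hB : (0:ℝ) < h^(p-1) := Real.rpow_pos_of_pos hh _
  -- main term bound
  have hmain : p * lam * h^(p-2) * ‖w‖^2 ≤ p * h^(p-1) * (Ψ ξ v v) := by
    have h1 : lam * ‖w‖^2 * h⁻¹ * (p * h^(p-1)) ≤ Ψ ξ v v * (p * h^(p-1)) :=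
      mul_le_mul_of_nonneg_right hΨlow (by positivity)
    calc p * lam * h^(p-2) * ‖w‖^2 = lam * ‖w‖^2 * h⁻¹ * (p * h^(p-1)) := by
          rw [← hpow]; ring
      _ ≤ Ψ ξ v v * (p * h^(p-1)) := h1
      _ = p * h^(p-1) * (Ψ ξ v v) := by ring
  set c := min (p*lam/2) (p*(p-1)*m^2/2) with hc_def
  have hc1 : c ≤ p*lam/2 := min_le_left _ _
  have hc2 : c ≤ p*(p-1)*m^2/2 := min_le_right _ _
  have hcpos : 0 < c := by
    apply lt_min
    · positivity
    · have : 0 < p - 1 := by linarith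
      positivity
  have step1 : c * h^(p-2) * ‖v‖^2 ≤ c * h^(p-2) * (2*‖w‖^2 + 2*(fd^2/m^2)) := by
    apply mul_le_mul_of_nonneg_left _ (by positivity)
    calc ‖v‖^2 ≤ 2*‖w‖^2 + 2*α^2*‖ξ‖^2 := hnv
      _ ≤ 2*‖w‖^2 + 2*(fd^2/m^2) := by linarith [hα2]
  have step2 : c * h^(p-2) * (2*‖w‖^2 + 2*(fd^2/m^2)) ≤
      p*(p-1)*h^(p-2)*fd^2 + p * lam * h^(p-2) * ‖w‖^2 := by
    have e2 : c * h^(p-2) * (2*‖w‖^2 + 2*(fd^2/m^2))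
        = (2*c) * h^(p-2) * ‖w‖^2 + (2*c/m^2) * h^(p-2) * fd^2 := by
      field_simp
    rw [e2]
    have b1 : (2*c) * h^(p-2) * ‖w‖^2 ≤ p * lam * h^(p-2) * ‖w‖^2 := by
      apply mul_le_mul_of_nonneg_right _ (sq_nonneg _)
      apply mul_le_mul_of_nonneg_right _ (le_of_lt hA)
      linarith
    have b2 : (2*c/m^2) * h^(p-2) * fd^2 ≤ p*(p-1) * h^(p-2) * fd^2 := by
      apply mul_le_mul_of_nonneg_right _ (sq_nonneg _)
      apply mul_le_mul_of_nonneg_right _ (le_of_lt hA)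
      rw [div_le_iff₀ (by positivity : (0:ℝ) < m^2)]
      linarith
    linarith
  calc c * h^(p-2) * ‖v‖^2 ≤ c * h^(p-2) * (2*‖w‖^2 + 2*(fd^2/m^2)) := step1
    _ ≤ p*(p-1)*h^(p-2)*fd^2 + p * lam * h^(p-2) * ‖w‖^2 := step2
    _ ≤ p*(p-1)*h^(p-2)*fd^2 + p*h^(p-1)*(Ψ ξ v v) := by linarith [hmain]

end Aux3

section Aux4
variable {N : ℕ} {H : Eu N → ℝ}

set_option maxHeartbeats 2000000 in
lemma segIneq (hH0 : H 0 = 0) (hHC2 : ContDiffOn ℝ 2 H {(0 : Eu N)}ᶜ)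
    (hHpos : ∀ ξ : Eu N, ξ ≠ 0 → 0 < H ξ)
    (hHhom : ∀ ξ : Eu N, ξ ≠ 0 → ∀ t : ℝ, 0 < t → H (t • ξ) = t * H ξ)
    {lam m M : ℝ} (hlam : 0 < lam)
    (hEll : ∀ ξ : Eu N, H ξ = 1 → ∀ ζ : Eu N, ⟪gradient H ξ, ζ⟫ = 0 →
        lam * ‖ζ‖ ^ 2 ≤ iteratedFDeriv ℝ 2 H ξ ![ζ, ζ])
    (hm : 0 < m) (hmle : ∀ ξ : Eu N, m * ‖ξ‖ ≤ H ξ)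
    (hM : 0 < M) (hMle : ∀ ξ : Eu N, H ξ ≤ M * ‖ξ‖)
    {p : ℝ} (hp1 : 1 < p) (hp2 : p < 2)
    {η η' : Eu N} (hη : η ≠ 0) (hη' : η' ≠ 0)
    (hseg : ∀ t ∈ Set.Icc (0:ℝ) 1, η' + t • (η - η') ≠ 0) :
    (H η')^p + p * ((H η')^(p-1) * fderiv ℝ H η' (η - η'))
      + (min (p*lam/2) (p*(p-1)*m^2/2)) * ((M/m)*(H η + H η'))^(p-2) * ‖η - η'‖^2 / 2
      ≤ (H η)^p := by
  set c₀ := min (p*lam/2) (p*(p-1)*m^2/2) with hc₀_def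
  have hc₀pos : 0 < c₀ := by
    apply lt_min
    · positivity
    · have : 0 < p - 1 := by linarith
      positivity
  set v : Eu N := η - η' with hv_def
  set γ : ℝ → Eu N := fun t => η' + t • v with hγ_def
  set K : ℝ := H η + H η' with hK_def
  have hKpos : 0 < K := by
    have := hHpos η hη; have := hHpos η' hη'; rw [hK_def]; linarith
  set B : ℝ := c₀ * ((M/m)*K)^(p-2) * ‖v‖^2 with hB_def
  have hγ0 : γ 0 = η' := by simp [hγ_def]
  have hγ1 : γ 1 = η := by simp [hγ_def, hv_def]
  have hγd : ∀ t : ℝ, HasDerivAt γ v t := by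
    intro t
    have : HasDerivAt (fun t : ℝ => t • v) ((1:ℝ) • v) t := (hasDerivAt_id t).smul_const v
    simpa [hγ_def] using this.const_add η'
  have hγne : ∀ t ∈ Set.Icc (0:ℝ) 1, γ t ≠ 0 := hseg
  -- pointwise positivity and bound on H ∘ γ
  have hγpos : ∀ t ∈ Set.Icc (0:ℝ) 1, 0 < H (γ t) := fun t ht => hHpos _ (hγne t ht)
  have hγbnd : ∀ t ∈ Set.Icc (0:ℝ) 1, H (γ t) ≤ (M/m) * K := by
    intro t ht
    obtain ⟨ht0, ht1⟩ := ht
    have h1 : γ t = (1-t) • η' + t • η := by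
      rw [hγ_def]; simp only [hv_def]
      module
    have h2 : ‖γ t‖ ≤ ‖η‖ + ‖η'‖ := by
      rw [h1]
      calc ‖(1-t) • η' + t • η‖ ≤ ‖(1-t) • η'‖ + ‖t • η‖ := norm_add_le _ _
        _ = (1-t) * ‖η'‖ + t * ‖η‖ := by
            rw [norm_smul, norm_smul, Real.norm_eq_abs, Real.norm_eq_abs,
              abs_of_nonneg (by linarith), abs_of_nonneg ht0]
        _ ≤ ‖η‖ + ‖η'‖ := by
            nlinarith [norm_nonneg η, norm_nonneg η']
    have h3 : ‖η‖ ≤ H η / m := by rw [le_div_iff₀ hm]; linarith [hmle η]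
    have h4 : ‖η'‖ ≤ H η' / m := by rw [le_div_iff₀ hm]; linarith [hmle η']
    calc H (γ t) ≤ M * ‖γ t‖ := hMle _
      _ ≤ M * (H η / m + H η' / m) := by
          apply mul_le_mul_of_nonneg_left _ (le_of_lt hM)
          linarith
      _ = (M/m) * K := by rw [hK_def]; field_simp
  -- derivative machinery
  have hHder : ∀ t ∈ Set.Icc (0:ℝ) 1, HasDerivAt (fun s => H (γ s)) (fderiv ℝ H (γ t) v) t := by
    intro t ht
    exact ((hDiffAt hHC2 (hγne t ht)).hasFDerivAt).comp_hasDerivAt t (hγd t)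
  have hΦder : ∀ t ∈ Set.Icc (0:ℝ) 1, HasDerivAt (fun s => fderiv ℝ H (γ s) v)
      (fderiv ℝ (fderiv ℝ H) (γ t) v v) t := by
    intro t ht
    have h1 : HasDerivAt (fun s => fderiv ℝ H (γ s)) (fderiv ℝ (fderiv ℝ H) (γ t) v) t :=
      ((hPhiDiffAt hHC2 (hγne t ht)).hasFDerivAt).comp_hasDerivAt t (hγd t)
    have h2 := h1.clm_apply (hasDerivAt_const t v)
    simpa using h2
  have hgder : ∀ t ∈ Set.Icc (0:ℝ) 1, HasDerivAt (fun s => (H (γ s))^p)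
      (p * (H (γ t))^(p-1) * fderiv ℝ H (γ t) v) t := by
    intro t ht
    have h1 : HasDerivAt (fun x : ℝ => x ^ p) (p * (H (γ t)) ^ (p-1)) (H (γ t)) :=
      Real.hasDerivAt_rpow_const (Or.inl (ne_of_gt (hγpos t ht)))
    have := h1.comp t (hHder t ht)
    simpa [mul_assoc, Function.comp_def] using this
  set G1 : ℝ → ℝ := fun t => p * (H (γ t))^(p-1) * fderiv ℝ H (γ t) v with hG1_def
  have hG1der : ∀ t ∈ Set.Icc (0:ℝ) 1, HasDerivAt G1
      (p * ((p-1) * (H (γ t))^(p-2) * fderiv ℝ H (γ t) v * fderiv ℝ H (γ t) v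
        + (H (γ t))^(p-1) * fderiv ℝ (fderiv ℝ H) (γ t) v v)) t := by
    intro t ht
    have h1 : HasDerivAt (fun x : ℝ => x ^ (p-1)) ((p-1) * (H (γ t)) ^ (p-1-1)) (H (γ t)) :=
      Real.hasDerivAt_rpow_const (Or.inl (ne_of_gt (hγpos t ht)))
    have h2 : HasDerivAt (fun s => (H (γ s))^(p-1))
        ((p-1) * (H (γ t)) ^ (p-2) * fderiv ℝ H (γ t) v) t := by
      have := h1.comp t (hHder t ht)
      have e : p - 1 - 1 = p - 2 := by ring
      rw [e] at this
      simpa [mul_assoc, Function.comp_def] using this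
    have h3 := (h2.mul (hΦder t ht)).const_mul p
    have h4 : (fun y => p * (H (γ y) ^ (p - 1) * (fderiv ℝ H (γ y)) v)) = G1 := by
      funext y; rw [hG1_def]; ring
    rw [← h4]
    exact h3
  -- lower bound on second derivative
  have hG1low : ∀ t ∈ Set.Icc (0:ℝ) 1,
      B ≤ p * ((p-1) * (H (γ t))^(p-2) * fderiv ℝ H (γ t) v * fderiv ℝ H (γ t) v
        + (H (γ t))^(p-1) * fderiv ℝ (fderiv ℝ H) (γ t) v v) := by
    intro t ht
    have h1 := hessBound hH0 hHC2 hHpos hHhom hlam hEll hm hmle hp1 (hγne t ht) v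
    have h2 : ((M/m)*K)^(p-2) ≤ (H (γ t))^(p-2) :=
      Real.rpow_le_rpow_of_nonpos (hγpos t ht) (hγbnd t ht) (by linarith)
    have h3 : B ≤ c₀ * (H (γ t))^(p-2) * ‖v‖^2 := by
      rw [hB_def]
      have := mul_le_mul_of_nonneg_right
        (mul_le_mul_of_nonneg_left h2 (le_of_lt hc₀pos)) (sq_nonneg ‖v‖)
      linarith [this]
    calc B ≤ c₀ * (H (γ t))^(p-2) * ‖v‖^2 := h3
      _ ≤ p*(p-1)*(H (γ t))^(p-2)*(fderiv ℝ H (γ t) v)^2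
          + p*(H (γ t))^(p-1)*(fderiv ℝ (fderiv ℝ H) (γ t) v v) := h1
      _ = p * ((p-1) * (H (γ t))^(p-2) * fderiv ℝ H (γ t) v * fderiv ℝ H (γ t) v
          + (H (γ t))^(p-1) * fderiv ℝ (fderiv ℝ H) (γ t) v v) := by ring
  -- first monotonicity: f1 t := G1 t - G1 0 - B * t is nonneg on [0,1]
  set f1 : ℝ → ℝ := fun t => G1 t - G1 0 - B * t with hf1_def
  have hf1der : ∀ t ∈ Set.Icc (0:ℝ) 1, HasDerivAt f1
      (p * ((p-1) * (H (γ t))^(p-2) * fderiv ℝ H (γ t) v * fderiv ℝ H (γ t) v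
        + (H (γ t))^(p-1) * fderiv ℝ (fderiv ℝ H) (γ t) v v) - B) t := by
    intro t ht
    have h1 := ((hG1der t ht).sub_const (G1 0)).sub ((hasDerivAt_id t).const_mul B)
    simp only [mul_one] at h1
    exact h1
  have hf1mono : MonotoneOn f1 (Set.Icc (0:ℝ) 1) := by
    apply monotoneOn_of_deriv_nonneg (convex_Icc 0 1)
    · intro t ht
      exact ((hf1der t ht).continuousAt).continuousWithinAt
    · intro t ht
      rw [interior_Icc] at ht
      exact ((hf1der t (Set.mem_Icc_of_Ioo ht)).differentiableAt).differentiableWithinAt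
    · intro t ht
      rw [interior_Icc] at ht
      rw [(hf1der t (Set.mem_Icc_of_Ioo ht)).deriv]
      have := hG1low t (Set.mem_Icc_of_Ioo ht)
      linarith
  have hf1nonneg : ∀ t ∈ Set.Icc (0:ℝ) 1, 0 ≤ f1 t := by
    intro t ht
    have h0 : f1 0 = 0 := by simp [hf1_def]
    have := hf1mono (Set.left_mem_Icc.mpr zero_le_one) ht ht.1
    rw [h0] at this; exact this
  -- second monotonicity
  set w : ℝ → ℝ := fun t => (H (γ t))^p - (H (γ 0))^p - G1 0 * t - B * t^2 / 2 with hw_def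
  have hwder : ∀ t ∈ Set.Icc (0:ℝ) 1, HasDerivAt w (f1 t) t := by
    intro t ht
    have h1 := (((hgder t ht).sub_const ((H (γ 0))^p)).sub
      ((hasDerivAt_id t).const_mul (G1 0))).sub
      (((hasDerivAt_pow 2 t).const_mul B).div_const 2)
    have e : p * (H (γ t))^(p-1) * fderiv ℝ H (γ t) v - G1 0 * 1
        - B * (2 * t^(2-1)) / 2 = f1 t := by
      simp only [hf1_def, hG1_def, pow_one]
      ring
    rw [← e]
    exact h1.congr_deriv (by norm_num)
  have hwmono : MonotoneOn w (Set.Icc (0:ℝ) 1) := by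
    apply monotoneOn_of_deriv_nonneg (convex_Icc 0 1)
    · intro t ht
      exact ((hwder t ht).continuousAt).continuousWithinAt
    · intro t ht
      rw [interior_Icc] at ht
      exact ((hwder t (Set.mem_Icc_of_Ioo ht)).differentiableAt).differentiableWithinAt
    · intro t ht
      rw [interior_Icc] at ht
      rw [(hwder t (Set.mem_Icc_of_Ioo ht)).deriv]
      exact hf1nonneg t (Set.mem_Icc_of_Ioo ht)
  have hfin : w 0 ≤ w 1 :=
    hwmono (Set.left_mem_Icc.mpr zero_le_one) (Set.right_mem_Icc.mpr zero_le_one) zero_le_one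
  have hw0 : w 0 = 0 := by simp [hw_def]
  have hw1 : w 1 = (H η)^p - (H η')^p - G1 0 - B / 2 := by
    rw [hw_def]; simp [hγ1, hγ0]
  rw [hw0, hw1] at hfin
  have hG10 : G1 0 = p * ((H η')^(p-1) * fderiv ℝ H η' (η - η')) := by
    rw [hG1_def]; simp only [hγ0, hv_def]; ring
  rw [hG10] at hfin
  have hBeq : B = c₀ * ((M/m)*K)^(p-2) * ‖η - η'‖^2 := by rw [hB_def, hv_def]
  rw [hBeq] at hfin
  rw [hK_def] at hfin
  linarith

lemma scalarCase {p : ℝ} (hp1 : 1 < p) (hp2 : p < 2) {s : ℝ} (hs : 0 < s) :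
    ((p-1)/4) * (1+s)^p ≤ 1 + (p-1) * s^p + p * s^(p-1) := by
  have hp0 : (0:ℝ) ≤ p := by linarith
  have hsp : (0:ℝ) ≤ s^p := Real.rpow_nonneg (le_of_lt hs) p
  have hsp1 : (0:ℝ) ≤ s^(p-1) := Real.rpow_nonneg (le_of_lt hs) (p-1)
  have h2p : (2:ℝ)^p ≤ 4 := by
    have h1 : (2:ℝ)^p ≤ (2:ℝ)^(2:ℝ) :=
      Real.rpow_le_rpow_of_exponent_le one_le_two (le_of_lt hp2)
    have h2 : (2:ℝ)^(2:ℝ) = 4 := by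
      rw [show (2:ℝ) = ((2:ℕ):ℝ) from by norm_num, Real.rpow_natCast]
      norm_num
    linarith
  have h1 : (1+s)^p ≤ 4*(1+s^p) := by
    rcases le_total s 1 with hs1 | hs1
    · have ha : (1+s)^p ≤ (2:ℝ)^p :=
        Real.rpow_le_rpow (by linarith) (by linarith) hp0
      nlinarith
    · have ha : (1+s)^p ≤ (2*s)^p :=
        Real.rpow_le_rpow (by linarith) (by linarith) hp0
      have hb' : (2*s)^p = 2^p * s^p := Real.mul_rpow (by norm_num) (le_of_lt hs)
      have hc : 2^p * s^p ≤ 4 * s^p := mul_le_mul_of_nonneg_right h2p hsp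
      nlinarith [hb', ha]
  have h3 : ((p-1)/4) * (4*(1+s^p)) = (p-1) + (p-1)*s^p := by ring
  have h4 : ((p-1)/4) * (1+s)^p ≤ ((p-1)/4) * (4*(1+s^p)) :=
    mul_le_mul_of_nonneg_left h1 (by linarith)
  have h5 : (p-1) ≤ 1 := by linarith
  have h6 : 0 ≤ p * s^(p-1) := by positivity
  nlinarith

end Aux4

set_option maxHeartbeats 2000000 in
theorem statement_8 {N : ℕ} (hN : 2 ≤ N)
    (H : EuclideanSpace ℝ (Fin N) → ℝ)
    (hH0 : H 0 = 0)
    (hHnonneg : ∀ ξ : EuclideanSpace ℝ (Fin N), 0 ≤ H ξ)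
    (hHC2 : ContDiffOn ℝ 2 H {(0 : EuclideanSpace ℝ (Fin N))}ᶜ)
    (hHeven : ∀ ξ : EuclideanSpace ℝ (Fin N), H (-ξ) = H ξ)
    (hHpos : ∀ ξ : EuclideanSpace ℝ (Fin N), ξ ≠ 0 → 0 < H ξ)
    (hHhom : ∀ ξ : EuclideanSpace ℝ (Fin N), ξ ≠ 0 → ∀ t : ℝ, 0 < t → H (t • ξ) = t * H ξ)
    (hHell : ∃ lam : ℝ, 0 < lam ∧ ∀ ξ : EuclideanSpace ℝ (Fin N), H ξ = 1 →
      ∀ ζ : EuclideanSpace ℝ (Fin N), ⟪gradient H ξ, ζ⟫ = 0 →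
        lam * ‖ζ‖ ^ 2 ≤ iteratedFDeriv ℝ 2 H ξ ![ζ, ζ])
    (p : ℝ) (hp1 : 1 < p) (hp2 : p < 2) :
    ∃ C : ℝ, 0 < C ∧ ∀ η η' : EuclideanSpace ℝ (Fin N), 0 < ‖η‖ + ‖η'‖ →
      (H η') ^ p + p * ⟪aVec H p η', η - η'⟫ +
          C * (H η + H η') ^ (p - 2) * (H (η - η')) ^ 2 ≤ (H η) ^ p := by
  obtain ⟨lam, hlam, hEll⟩ := hHell
  obtain ⟨m, M, hm, hM, hmM⟩ := normEquiv hN hH0 hHC2 hHpos hHhom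
  have hmle : ∀ ξ : Eu N, m * ‖ξ‖ ≤ H ξ := fun ξ => (hmM ξ).1
  have hMle : ∀ ξ : Eu N, H ξ ≤ M * ‖ξ‖ := fun ξ => (hmM ξ).2
  have hp1' : (0:ℝ) < p - 1 := by linarith
  have hpne : p ≠ 0 := by positivity
  set c₀ := min (p*lam/2) (p*(p-1)*m^2/2) with hc₀_def
  have hc₀pos : 0 < c₀ := by
    apply lt_min
    · positivity
    · positivity
  have hMm : (0:ℝ) < (M/m)^(p-2) := Real.rpow_pos_of_pos (div_pos hM hm) _
  set C := min (min 1 ((p-1)/4)) (c₀/2 * (M/m)^(p-2) / M^2) with hC_def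
  have hCpos : 0 < C := by
    apply lt_min (lt_min one_pos (by positivity))
    positivity
  have hC1 : C ≤ 1 := le_trans (min_le_left _ _) (min_le_left _ _)
  have hC2 : C ≤ (p-1)/4 := le_trans (min_le_left _ _) (min_le_right _ _)
  have hC3 : C ≤ c₀/2 * (M/m)^(p-2) / M^2 := min_le_right _ _
  have merge2 : ∀ x : ℝ, 0 < x → x^(p-2) * x^2 = x^p := by
    intro x hx
    rw [← Real.rpow_natCast x 2, ← Real.rpow_add hx]
    norm_num
  have merge1 : ∀ x : ℝ, 0 < x → x^(p-1) * x = x^p := by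
    intro x hx
    have h : x^(p-1) * x^(1:ℝ) = x^p := by
      rw [← Real.rpow_add hx]; norm_num
    rwa [Real.rpow_one] at h
  refine ⟨C, hCpos, ?_⟩
  intro η η' hne
  rcases eq_or_ne η' 0 with rfl | hη'
  · -- Case A : η' = 0
    have hη : η ≠ 0 := by
      intro h; rw [h] at hne; simp at hne
    have hA : 0 < H η := hHpos η hη
    have haz : aVec H p (0 : Eu N) = 0 := by simp [aVec]
    rw [haz]
    simp only [inner_zero_left, mul_zero, add_zero, sub_zero, hH0, zero_add]
    rw [Real.zero_rpow hpne, zero_add]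
    have key : (H η)^(p-2) * (H η)^2 = (H η)^p := merge2 _ hA
    have h1 : C * (H η)^(p-2) * (H η)^2 ≤ (H η)^p := by
      rw [mul_assoc, key]
      nlinarith [Real.rpow_pos_of_pos hA p]
    linarith
  rcases eq_or_ne η 0 with rfl | hη
  · -- Case B : η = 0
    have hA : 0 < H η' := hHpos η' hη'
    simp only [aVec, if_neg hη', zero_sub, hH0, zero_add]
    rw [Real.zero_rpow hpne]
    rw [real_inner_smul_left, gradInner, map_neg, hHeven]
    rw [euler hH0 hHC2 hHhom hη']
    have key : (H η')^(p-2) * (H η')^2 = (H η')^p := merge2 _ hA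
    have key1 : (H η')^(p-1) * H η' = (H η')^p := merge1 _ hA
    have hAp : 0 < (H η')^p := Real.rpow_pos_of_pos hA p
    have e : (H η')^p + p * ((H η')^(p-1) * -(H η')) + C * (H η')^(p-2) * (H η')^2
        = (1 - p + C) * (H η')^p := by
      rw [mul_assoc C, key]
      have : (H η')^(p-1) * -(H η') = -((H η')^(p-1) * H η') := by ring
      rw [this, key1]; ring
    rw [e]
    nlinarith
  by_cases hseg : ∀ t ∈ Set.Icc (0:ℝ) 1, η' + t • (η - η') ≠ 0
  · -- Case C : segment avoids the origin
    have key := segIneq hH0 hHC2 hHpos hHhom hlam hEll hm hmle hM hMle hp1 hp2 hη hη' hseg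
    simp only [aVec, if_neg hη']
    rw [real_inner_smul_left, gradInner]
    have hK : 0 < H η + H η' := by linarith [hHpos η hη, hHpos η' hη']
    have hKp : 0 < (H η + H η')^(p-2) := Real.rpow_pos_of_pos hK _
    have e1 : ((M/m)*(H η + H η'))^(p-2) = (M/m)^(p-2) * (H η + H η')^(p-2) :=
      Real.mul_rpow (le_of_lt (div_pos hM hm)) (le_of_lt hK)
    have e2 : (H (η - η'))^2 ≤ M^2 * ‖η - η'‖^2 := by
      have h1 := hMle (η - η')
      have h2 := hHnonneg (η - η')
      nlinarith [norm_nonneg (η - η')]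
    have final : C * (H η + H η')^(p-2) * (H (η-η'))^2
        ≤ c₀ * ((M/m)*(H η + H η'))^(p-2) * ‖η-η'‖^2 / 2 := by
      rw [e1]
      have s1 : C * (H η + H η')^(p-2) * (H (η-η'))^2
          ≤ (c₀/2 * (M/m)^(p-2) / M^2) * (H η + H η')^(p-2) * (M^2 * ‖η-η'‖^2) := by
        apply mul_le_mul (mul_le_mul_of_nonneg_right hC3 (le_of_lt hKp)) e2
          (sq_nonneg _) (by positivity)
      have s2 : (c₀/2 * (M/m)^(p-2) / M^2) * (H η + H η')^(p-2) * (M^2 * ‖η-η'‖^2)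
          = c₀ * ((M/m)^(p-2) * (H η + H η')^(p-2)) * ‖η-η'‖^2 / 2 := by
        field_simp
      linarith
    linarith
  · -- Case D : the segment passes through the origin
    push_neg at hseg
    obtain ⟨t₀, ht₀, heq⟩ := hseg
    have ht₀0 : t₀ ≠ 0 := by
      intro h; rw [h] at heq; simp at heq; exact hη' heq
    have ht₀1 : t₀ ≠ 1 := by
      intro h; rw [h, one_smul] at heq
      apply hη
      have : η = η' + (η - η') := by abel
      rw [this, heq]
    have ht₀pos : 0 < t₀ := lt_of_le_of_ne ht₀.1 (Ne.symm ht₀0)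
    have ht₀lt : t₀ < 1 := lt_of_le_of_ne ht₀.2 ht₀1
    have h1t : (0:ℝ) < 1 - t₀ := by linarith
    set s := t₀ / (1 - t₀) with hs_def
    have hs : 0 < s := div_pos ht₀pos h1t
    have e : (1 - t₀) • η' = (-t₀) • η := by
      rw [smul_sub] at heq
      rw [sub_smul, one_smul, neg_smul]
      have : η' - t₀ • η' + t₀ • η = 0 := by
        rw [← heq]; abel
      have h2 : η' - t₀ • η' = -(t₀ • η) := by
        rw [eq_neg_iff_add_eq_zero]; exact this
      exact h2
    have e2 : η' = (-s) • η := by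
      have h3 := congrArg (fun x : Eu N => (1-t₀)⁻¹ • x) e
      simp only [smul_smul] at h3
      rw [inv_mul_cancel₀ (ne_of_gt h1t), one_smul] at h3
      rw [h3]
      congr 1
      rw [hs_def]
      field_simp
    have hA : 0 < H η := hHpos η hη
    have h1s : (0:ℝ) < 1 + s := by linarith
    have hHη' : H η' = s * H η := by
      rw [e2, neg_smul, hHeven, hHhom η hη s hs]
    have hv : η - η' = (1+s) • η := by
      rw [e2]; module
    have hHv : H (η - η') = (1+s) * H η := by
      rw [hv, hHhom η hη (1+s) h1s]
    have hfd : fderiv ℝ H η' (η - η') = -((1+s) * H η) := by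
      have hgrad : fderiv ℝ H η' = fderiv ℝ H (-η) := by
        have he : η' = s • (-η) := by rw [e2, neg_smul, smul_neg]
        rw [he]
        exact fderivHom hH0 hHC2 hHhom (neg_ne_zero.mpr hη) hs
      rw [hgrad, hv, map_smul]
      rw [fderivNeg hHC2 hHeven hη η, euler hH0 hHC2 hHhom hη]
      simp only [smul_eq_mul]
      ring
    simp only [aVec, if_neg hη']
    rw [real_inner_smul_left, gradInner, hfd, hHη', hHv]
    have eC : H η + s * H η = (1+s) * H η := by ring
    rw [eC]
    -- scalar reduction
    have esp : s^(p-1) * s = s^p := merge1 _ hs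
    have key : s^p - p*(s^(p-1)*(1+s)) + C*(1+s)^p ≤ 1 := by
      have h1 := scalarCase hp1 hp2 hs
      have h2 : C * (1+s)^p ≤ ((p-1)/4) * (1+s)^p :=
        mul_le_mul_of_nonneg_right hC2 (Real.rpow_nonneg (le_of_lt h1s) p)
      have h3 : s^(p-1)*(1+s) = s^(p-1) + s^p := by
        rw [mul_add, mul_one, esp]
      rw [h3]
      nlinarith
    have t2 : (s*H η)^(p-1) * (-((1+s)*H η)) = -(s^(p-1)*(1+s)) * (H η)^p := by
      rw [Real.mul_rpow (le_of_lt hs) (le_of_lt hA)]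
      have : s^(p-1) * (H η)^(p-1) * (-((1+s)*H η))
          = -(s^(p-1)*(1+s)) * ((H η)^(p-1) * H η) := by ring
      rw [this, merge1 _ hA]
    have t3 : ((1+s)*H η)^(p-2) * ((1+s)*H η)^2 = (1+s)^p * (H η)^p := by
      rw [Real.mul_rpow (le_of_lt h1s) (le_of_lt hA), mul_pow]
      have : (1+s)^(p-2) * (H η)^(p-2) * ((1+s)^2 * (H η)^2)
          = ((1+s)^(p-2) * (1+s)^2) * ((H η)^(p-2) * (H η)^2) := by ring
      rw [this, merge2 _ hA, merge2 _ h1s]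
    have eA : (s*H η)^p = s^p * (H η)^p := Real.mul_rpow (le_of_lt hs) (le_of_lt hA)
    have egoal : (s*H η)^p + p * ((s*H η)^(p-1) * (-((1+s)*H η)))
        + C * ((1+s)*H η)^(p-2) * ((1+s)*H η)^2
        = (s^p - p*(s^(p-1)*(1+s)) + C*(1+s)^p) * (H η)^p := by
      rw [eA, t2, mul_assoc C, t3]
      ring
    rw [egoal]
    calc (s^p - p*(s^(p-1)*(1+s)) + C*(1+s)^p) * (H η)^p
        ≤ 1 * (H η)^p :=
          mul_le_mul_of_nonneg_right key (Real.rpow_nonneg (le_of_lt hA) p)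
      _ = (H η)^p := one_mul _
end
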